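/- arXiv:2302.06974 — 9 statements merged into one kernel-verified Lean document; each statement's English description precedes it below -/
import Mathlib

section
/- For every integer n, the group BS(1,n) has commutator width 1; that is, every element of the derived subgroup of BS(1,n) is a single commutator. -/
/-- Relators of the Baumslag–Solitar group BS(1,n) = ⟨a,t | t⁻¹ a t = aⁿ⟩,
with `false` standing for `a` and `true` for `t`. -/
def BSrels (n : ℤ) : Set (FreeGroup Bool) :=
  {(FreeGroup.of true)⁻¹ * FreeGroup.of false * FreeGroup.of true *
    (FreeGroup.of false ^ n)⁻¹}

/-- The Baumslag–Solitar group BS(1,n). -/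
abbrev BS (n : ℤ) := PresentedGroup (BSrels n)

open scoped commutatorElement

namespace BSaux

variable (n : ℤ)

/-- The generator `t`. -/
def τ : BS n := PresentedGroup.of true
/-- The generator `a`. -/
def α : BS n := PresentedGroup.of false

variable {n}

lemma rel : (τ n)⁻¹ * α n * τ n = α n ^ n := by
  have h1 : PresentedGroup.mk (BSrels n)
      ((FreeGroup.of true)⁻¹ * FreeGroup.of false * FreeGroup.of true *
        (FreeGroup.of false ^ n)⁻¹) = 1 := by
    apply (QuotientGroup.eq_one_iff _).mpr
    exact Subgroup.subset_normalClosure (by simp [BSrels])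
  simp only [map_mul, map_inv, map_zpow] at h1
  have h2 : (τ n)⁻¹ * α n * τ n * (α n ^ n)⁻¹ = 1 := h1
  calc (τ n)⁻¹ * α n * τ n = (τ n)⁻¹ * α n * τ n * (α n ^ n)⁻¹ * α n ^ n := by group
  _ = α n ^ n := by rw [h2]; group

lemma conj_zpow' (m : ℤ) : (τ n)⁻¹ * α n ^ m * τ n = α n ^ (m * n) := by
  have : ((τ n)⁻¹ * α n * ((τ n)⁻¹)⁻¹) ^ m = (τ n)⁻¹ * α n ^ m * ((τ n)⁻¹)⁻¹ := conj_zpow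
  rw [inv_inv, rel] at this
  rw [← this, ← zpow_mul, mul_comm]

lemma conj_zpow_pow (s : ℕ) (m : ℤ) :
    (τ n ^ s)⁻¹ * α n ^ m * τ n ^ s = α n ^ (m * n ^ s) := by
  induction s generalizing m with
  | zero => simp
  | succ s ih =>
      have : (τ n ^ (s+1))⁻¹ * α n ^ m * τ n ^ (s+1)
          = (τ n)⁻¹ * ((τ n ^ s)⁻¹ * α n ^ m * τ n ^ s) * τ n := by
        rw [pow_succ]; group
      rw [this, ih, conj_zpow', pow_succ]; ring_nf

variable (n) in
/-- `c p m = τ^p * α^m * τ^{-p}`. -/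
def c (p : ℕ) (m : ℤ) : BS n := τ n ^ p * α n ^ m * (τ n ^ p)⁻¹

lemma c_mul_same (p : ℕ) (x y : ℤ) : c n p x * c n p y = c n p (x + y) := by
  simp only [c, zpow_add]; group

lemma c_inv (p : ℕ) (m : ℤ) : (c n p m)⁻¹ = c n p (-m) := by
  simp only [c, zpow_neg]; group

lemma c_lift {p q : ℕ} (h : p ≤ q) (m : ℤ) : c n p m = c n q (m * n ^ (q - p)) := by
  obtain ⟨s, rfl⟩ : ∃ s, q = p + s := ⟨q - p, by omega⟩
  simp only [Nat.add_sub_cancel_left]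
  have := conj_zpow_pow (n := n) s m
  have hα : α n ^ m = τ n ^ s * α n ^ (m * n ^ s) * (τ n ^ s)⁻¹ := by
    rw [← this]; group
  rw [c, hα, c, pow_add]
  group

variable (n) in
/-- The subgroup `{τ^p α^{k(n-1)} τ^{-p}}` of `BS n`. -/
def S : Subgroup (BS n) where
  carrier := {g | ∃ (p : ℕ) (k : ℤ), g = c n p (k * (n - 1))}
  one_mem' := ⟨0, 0, by simp [c]⟩
  mul_mem' := by
    rintro _ _ ⟨p, k, rfl⟩ ⟨q, l, rfl⟩
    refine ⟨max p q, k * n ^ (max p q - p) + l * n ^ (max p q - q), ?_⟩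
    rw [c_lift (le_max_left p q), c_lift (le_max_right p q), c_mul_same]
    ring_nf
  inv_mem' := by
    rintro _ ⟨p, k, rfl⟩
    exact ⟨p, -k, by rw [c_inv]; ring_nf⟩

lemma tau_conj_c (p : ℕ) (m : ℤ) : τ n * c n p m * (τ n)⁻¹ = c n (p+1) m := by
  simp only [c, pow_succ']
  group

lemma alpha_mem_S_conj : ∀ g, g ∈ S n ↔ α n * g * (α n)⁻¹ ∈ S n := by
  have key : ∀ p (m : ℤ), α n * c n p m * (α n)⁻¹ = c n p m := by
    intro p m
    have hα : α n = c n p ((n:ℤ) ^ p) := by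
      have := conj_zpow_pow (n := n) p 1
      rw [one_mul] at this
      rw [c, ← this]; group
    rw [hα, c_mul_same, c_inv, c_mul_same]
    ring_nf
  rintro g
  constructor
  · rintro ⟨p, k, rfl⟩; exact ⟨p, k, key p _⟩
  · rintro ⟨p, k, hk⟩
    refine ⟨p, k, ?_⟩
    have h2 := key p (k * (n-1))
    have hg : g = (α n)⁻¹ * (α n * g * (α n)⁻¹) * α n := by group
    rw [hg, hk]
    conv_lhs => rw [← h2]
    group

lemma tau_mem_S_conj : ∀ g, g ∈ S n ↔ τ n * g * (τ n)⁻¹ ∈ S n := by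
  intro g
  constructor
  · rintro ⟨p, k, rfl⟩
    exact ⟨p + 1, k, by rw [tau_conj_c]⟩
  · rintro ⟨p, k, hk⟩
    have hg : g = (τ n)⁻¹ * c n p (k * (n-1)) * τ n := by rw [← hk]; group
    cases p with
    | zero =>
        refine ⟨0, k * n, ?_⟩
        rw [hg]
        simp only [c, pow_zero, one_mul, inv_one, mul_one]
        rw [conj_zpow']
        congr 1
        ring
    | succ p =>
        refine ⟨p, k, ?_⟩
        rw [hg, ← tau_conj_c]
        group

lemma S_normal : (S n).Normal := by
  rw [← Subgroup.normalizer_eq_top_iff]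
  rw [eq_top_iff]
  intro x _
  refine PresentedGroup.generated_by _ _ ?_ x
  intro j
  rw [Subgroup.mem_normalizer_iff]
  cases j
  · exact alpha_mem_S_conj
  · exact tau_mem_S_conj

lemma base_comm : ∀ j j' : Bool,
    ⁅(PresentedGroup.of j : BS n), PresentedGroup.of j'⁆ ∈ S n := by
  have hat : ⁅α n, τ n⁆ ∈ S n := by
    refine ⟨1, 1, ?_⟩
    have : c n 1 (1 * (n - 1)) = τ n * α n ^ (n-1) * (τ n)⁻¹ := by
      simp [c]
    rw [this]
    have hrel : α n = τ n * α n ^ n * (τ n)⁻¹ := by rw [← rel]; group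
    calc ⁅α n, τ n⁆ = α n * τ n * (α n)⁻¹ * (τ n)⁻¹ := by group
    _ = (τ n * α n ^ n * (τ n)⁻¹) * τ n * (α n)⁻¹ * (τ n)⁻¹ := by rw [← hrel]
    _ = τ n * (α n ^ n * (α n)⁻¹) * (τ n)⁻¹ := by group
    _ = τ n * α n ^ (n-1) * (τ n)⁻¹ := by
        rw [show α n ^ (n-1) = α n ^ n * (α n)⁻¹ by rw [zpow_sub, zpow_one]]
  intro j j'
  match j, j' with
  | false, false => simpa using (S n).one_mem
  | true, true => simpa using (S n).one_mem
  | false, true => exact hat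
  | true, false => rw [← commutatorElement_inv]; exact (S n).inv_mem hat

lemma key_comm (x y : BS n) : ⁅x, y⁆ ∈ S n := by
  have hN := S_normal (n := n)
  -- inner subgroup for fixed x
  have inner : ∀ x : BS n, (∀ j : Bool, ⁅x, (PresentedGroup.of j : BS n)⁆ ∈ S n) →
      ∀ y, ⁅x, y⁆ ∈ S n := by
    intro x hx
    set U : Subgroup (BS n) :=
      { carrier := {y | ⁅x, y⁆ ∈ S n}
        one_mem' := by simp [(S n).one_mem]
        mul_mem' := by
          intro a b ha hb
          have : ⁅x, a * b⁆ = ⁅x, a⁆ * (a * ⁅x, b⁆ * a⁻¹) := by group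
          rw [Set.mem_setOf_eq, this]
          exact (S n).mul_mem ha (hN.conj_mem _ hb a)
        inv_mem' := by
          intro a ha
          have : ⁅x, a⁻¹⁆ = a⁻¹ * ⁅x, a⁆⁻¹ * (a⁻¹)⁻¹ := by group
          rw [Set.mem_setOf_eq, this]
          exact (hN.conj_mem _ ((S n).inv_mem ha) a⁻¹) } with hU
    intro y
    exact PresentedGroup.generated_by _ U hx y
  -- outer subgroup
  set T : Subgroup (BS n) :=
    { carrier := {x | ∀ y, ⁅x, y⁆ ∈ S n}
      one_mem' := by intro y; simp [(S n).one_mem]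
      mul_mem' := by
        intro a b ha hb
        intro y
        have : ⁅a * b, y⁆ = (a * ⁅b, y⁆ * a⁻¹) * ⁅a, y⁆ := by group
        rw [this]
        exact (S n).mul_mem (hN.conj_mem _ (hb y) a) (ha y)
      inv_mem' := by
        intro a ha y
        have : ⁅a⁻¹, y⁆ = a⁻¹ * ⁅a, y⁆⁻¹ * (a⁻¹)⁻¹ := by group
        rw [this]
        exact hN.conj_mem _ ((S n).inv_mem (ha y)) a⁻¹ } with hT
  have hx : ∀ x, x ∈ T := by
    intro x
    refine PresentedGroup.generated_by _ T ?_ x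
    intro j
    exact inner _ (fun j' => base_comm j j')
  exact hx x y

end BSaux

open BSaux in
/-- BS(1,n) has commutator width 1: every element of the derived subgroup is a
single commutator. -/
theorem stmt_3 (n : ℤ) (g : BS n) (hg : g ∈ commutator (BS n)) :
    ∃ x y : BS n, g = ⁅x, y⁆ := by
  have hle : commutator (BS n) ≤ S n := by
    rw [commutator_def, Subgroup.commutator_le]
    intro g1 _ g2 _
    exact key_comm g1 g2
  obtain ⟨p, k, rfl⟩ := hle hg
  refine ⟨τ n ^ p * (τ n)⁻¹ * (τ n ^ p)⁻¹, τ n ^ p * α n ^ k * (τ n ^ p)⁻¹, ?_⟩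
  have hcomm : ⁅τ n ^ p * (τ n)⁻¹ * (τ n ^ p)⁻¹, τ n ^ p * α n ^ k * (τ n ^ p)⁻¹⁆
      = τ n ^ p * ((τ n)⁻¹ * α n ^ k * τ n * (α n ^ k)⁻¹) * (τ n ^ p)⁻¹ := by
    group
  rw [hcomm, conj_zpow']
  have : α n ^ (k * n) * (α n ^ k)⁻¹ = α n ^ (k * (n - 1)) := by
    rw [← zpow_neg, ← zpow_add]; ring_nf
  rw [this]
  rfl
end

section
/- Let n be an integer and let S be the verbal subgroup of BS(1,n) generated by all squares. Then every element of S is a product of at most 2 squares; that is, the verbal width of S is at most 2. -/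
namespace BSaux

variable (n : ℤ)

def aG : BS n := PresentedGroup.of false
def tG : BS n := PresentedGroup.of true

lemma rel1 : (tG n)⁻¹ * aG n * tG n = aG n ^ n := by
  have h : (PresentedGroup.mk (BSrels n)) ((FreeGroup.of true)⁻¹ * FreeGroup.of false *
      FreeGroup.of true * (FreeGroup.of false ^ n)⁻¹) = 1 := by
    apply (QuotientGroup.eq_one_iff _).2
    exact Subgroup.subset_normalClosure rfl
  simp only [map_mul, map_inv, map_zpow] at h
  exact mul_inv_eq_one.mp h

def aa (k : ℤ) : BS n := tG n ^ k * aG n * (tG n ^ k)⁻¹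

lemma aa_conj (b k : ℤ) : tG n ^ b * aa n k * (tG n ^ b)⁻¹ = aa n (b + k) := by
  unfold aa; rw [zpow_add]; group

lemma aa_pred (k : ℤ) : aa n (k - 1) = aa n k ^ n := by
  have h := rel1 n
  calc aa n (k-1) = tG n ^ k * ((tG n)⁻¹ * aG n * tG n) * (tG n ^ k)⁻¹ := by unfold aa; group
  _ = tG n ^ k * (aG n ^ n) * (tG n ^ k)⁻¹ := by rw [h]
  _ = aa n k ^ n := by unfold aa; rw [conj_zpow]

lemma aa_sub (k : ℤ) (m : ℕ) : aa n (k - m) = aa n k ^ ((n : ℤ) ^ m) := by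
  induction m with
  | zero => simp
  | succ m ih =>
    have h1 : k - ((m + 1 : ℕ) : ℤ) = (k - m) - 1 := by push_cast; ring
    rw [h1, aa_pred, ih, ← zpow_mul, ← pow_succ]

lemma aa_comm (j k : ℤ) : Commute (aa n j) (aa n k) := by
  rcases le_total j k with h | h
  · have h2 : aa n j = aa n k ^ ((n : ℤ) ^ (k - j).toNat) := by
      have := aa_sub n k (k - j).toNat
      rwa [show k - (((k - j).toNat : ℤ)) = j by omega] at this
    rw [h2]; exact (Commute.refl _).zpow_left _
  · have h2 : aa n k = aa n j ^ ((n : ℤ) ^ (j - k).toNat) := by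
      have := aa_sub n j (j - k).toNat
      rwa [show j - (((j - k).toNat : ℤ)) = k by omega] at this
    rw [h2]; exact (Commute.refl _).zpow_right _

def A : Subgroup (BS n) := Subgroup.closure (Set.range (aa n))

lemma aa_mem (k : ℤ) : aa n k ∈ A n := Subgroup.subset_closure (Set.mem_range_self k)

lemma comm_aa_A (j : ℤ) : ∀ y ∈ A n, Commute (aa n j) y := by
  intro y hy
  induction hy using Subgroup.closure_induction with
  | mem x hx => obtain ⟨k, rfl⟩ := hx; exact aa_comm n j k
  | one => exact Commute.one_right _
  | mul x y hx hy ihx ihy => exact ihx.mul_right ihy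
  | inv x hx ihx => exact ihx.inv_right

lemma commA : ∀ x ∈ A n, ∀ y ∈ A n, Commute x y := by
  intro x hx y hy
  induction hx using Subgroup.closure_induction with
  | mem z hz => obtain ⟨k, rfl⟩ := hz; exact comm_aa_A n k y hy
  | one => exact Commute.one_left _
  | mul z w hz hw ihz ihw => exact ihz.mul_left ihw
  | inv z hz ihz => exact ihz.inv_left

lemma conjA (b : ℤ) : ∀ w ∈ A n, tG n ^ b * w * (tG n ^ b)⁻¹ ∈ A n := by
  intro w hw
  induction hw using Subgroup.closure_induction with
  | mem x hx =>
    obtain ⟨k, rfl⟩ := hx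
    rw [aa_conj]; exact aa_mem n _
  | one => simpa using one_mem (A n)
  | mul x y hx hy ihx ihy =>
    have h : tG n ^ b * (x * y) * (tG n ^ b)⁻¹ =
        (tG n ^ b * x * (tG n ^ b)⁻¹) * (tG n ^ b * y * (tG n ^ b)⁻¹) := by group
    rw [h]; exact mul_mem ihx ihy
  | inv x hx ihx =>
    have h : tG n ^ b * x⁻¹ * (tG n ^ b)⁻¹ = (tG n ^ b * x * (tG n ^ b)⁻¹)⁻¹ := by group
    rw [h]; exact inv_mem ihx

lemma conjA' (b : ℤ) (w : BS n) (hw : w ∈ A n) : (tG n ^ b)⁻¹ * w * tG n ^ b ∈ A n := by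
  have := conjA n (-b) w hw
  rwa [zpow_neg, inv_inv] at this

/-- conjugate of `w ∈ A` by `t^b`, times `w`, is a square of an element of `A`. -/
lemma key (b : ℤ) : ∀ w ∈ A n, ∃ y ∈ A n, (tG n ^ b)⁻¹ * w * tG n ^ b * w = y ^ 2 := by
  intro w hw
  induction hw using Subgroup.closure_induction with
  | mem x hx =>
    obtain ⟨k, rfl⟩ := hx
    have hc : (tG n ^ b)⁻¹ * aa n k * tG n ^ b = aa n (-b + k) := by
      have := aa_conj n (-b) k
      rwa [zpow_neg, inv_inv] at this
    rw [hc]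
    have main : ∃ j : ℤ, aa n (-b + k) * aa n k = aa n j ^ ((n : ℤ) ^ b.natAbs + 1) := by
      rcases le_or_gt 0 b with hb | hb
      · refine ⟨k, ?_⟩
        have h1 : aa n (-b + k) = aa n k ^ ((n : ℤ) ^ b.natAbs) := by
          have := aa_sub n k b.natAbs
          rwa [show k - ((b.natAbs : ℤ)) = -b + k by omega] at this
        rw [h1, zpow_add, zpow_one]
      · refine ⟨-b + k, ?_⟩
        have h1 : aa n k = aa n (-b + k) ^ ((n : ℤ) ^ b.natAbs) := by
          have := aa_sub n (-b + k) b.natAbs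
          rwa [show (-b + k) - ((b.natAbs : ℤ)) = k by omega] at this
        rw [h1, zpow_add, zpow_one]
        exact ((Commute.refl _).zpow_right _).eq
    obtain ⟨j, hj⟩ := main
    rw [hj]
    rcases Int.even_or_odd n with ⟨s, hs⟩ | hodd
    · -- n = s + s even : aa j itself is a square
      have h2 : aa n j = aa n (j + 1) ^ n := by
        have := aa_pred n (j + 1)
        rwa [show j + 1 - 1 = j by ring] at this
      refine ⟨aa n (j + 1) ^ (s * ((n : ℤ) ^ b.natAbs + 1)),
        Subgroup.zpow_mem _ (aa_mem n _) _, ?_⟩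
      rw [h2, ← zpow_mul, sq, ← zpow_add]
      congr 1
      rw [hs]; ring
    · -- n odd : exponent is even
      obtain ⟨r, hr⟩ : Even ((n : ℤ) ^ b.natAbs + 1) := (hodd.pow).add_one
      rw [hr]
      refine ⟨aa n j ^ r, Subgroup.zpow_mem _ (aa_mem n _) _, ?_⟩
      rw [sq, ← zpow_add]
  | one =>
    exact ⟨1, one_mem _, by simp⟩
  | mul x y hx hy ihx ihy =>
    obtain ⟨y₁, hy₁, e₁⟩ := ihx
    obtain ⟨y₂, hy₂, e₂⟩ := ihy
    have hyc : (tG n ^ b)⁻¹ * y * tG n ^ b ∈ A n := conjA' n b y hy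
    have swap : ((tG n ^ b)⁻¹ * y * tG n ^ b) * x = x * ((tG n ^ b)⁻¹ * y * tG n ^ b) :=
      (commA n _ hyc x hx).eq
    have step1 : (tG n ^ b)⁻¹ * (x * y) * tG n ^ b * (x * y) =
        ((tG n ^ b)⁻¹ * x * tG n ^ b) * ((((tG n ^ b)⁻¹ * y * tG n ^ b) * x) * y) := by
      group
    rw [step1, swap]
    have step3 : ((tG n ^ b)⁻¹ * x * tG n ^ b) * ((x * ((tG n ^ b)⁻¹ * y * tG n ^ b)) * y) =
        ((tG n ^ b)⁻¹ * x * tG n ^ b * x) * ((tG n ^ b)⁻¹ * y * tG n ^ b * y) := by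
      group
    rw [step3, e₁, e₂]
    exact ⟨y₁ * y₂, mul_mem hy₁ hy₂, ((commA n y₁ hy₁ y₂ hy₂).mul_pow 2).symm⟩
  | inv x hx ihx =>
    obtain ⟨y, hy, e⟩ := ihx
    have h1 : (tG n ^ b)⁻¹ * x⁻¹ * tG n ^ b * x⁻¹ =
        x * ((tG n ^ b)⁻¹ * x * tG n ^ b * x)⁻¹ * x⁻¹ := by group
    have hcomm : Commute x ((y ^ 2)⁻¹) := ((commA n x hx y hy).pow_right 2).inv_right
    rw [h1, e, hcomm.eq]
    refine ⟨y⁻¹, inv_mem hy, ?_⟩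
    rw [inv_pow]
    group

/-- every element of BS(1,n) is `t^b * w` with `w ∈ A`. -/
lemma decomp (x : BS n) : ∃ b : ℤ, ∃ w ∈ A n, x = tG n ^ b * w := by
  let D : Subgroup (BS n) :=
    { carrier := {x | ∃ b : ℤ, ∃ w ∈ A n, x = tG n ^ b * w}
      one_mem' := ⟨0, 1, one_mem _, by simp⟩
      mul_mem' := by
        rintro x y ⟨b, w, hw, rfl⟩ ⟨c, v, hv, rfl⟩
        refine ⟨b + c, ((tG n ^ c)⁻¹ * w * tG n ^ c) * v,
          mul_mem (conjA' n c w hw) hv, ?_⟩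
        rw [zpow_add]; group
      inv_mem' := by
        rintro x ⟨b, w, hw, rfl⟩
        refine ⟨-b, tG n ^ b * w⁻¹ * (tG n ^ b)⁻¹, conjA n b w⁻¹ (inv_mem hw), ?_⟩
        rw [zpow_neg]; group }
  have hD : ∀ z : BS n, z ∈ D := by
    have : Subgroup.closure (Set.range (PresentedGroup.of : Bool → BS n)) ≤ D := by
      apply Subgroup.closure_le _ |>.2
      rintro _ ⟨bit, rfl⟩
      cases bit
      · exact ⟨0, aa n 0, aa_mem n 0, by simp [aa, aG]⟩
      · exact ⟨1, 1, one_mem _, by simp [tG]⟩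
    intro z
    exact this (by rw [PresentedGroup.closure_range_of]; trivial)
  exact hD x

end BSaux

/-- Every element of the verbal subgroup of squares of BS(1,n) is a product of
at most two squares: the verbal width of the subgroup of squares is at most 2. -/
theorem stmt_4 (n : ℤ) (g : BS n)
    (hg : g ∈ Subgroup.closure {s : BS n | ∃ x : BS n, s = x ^ 2}) :
    ∃ x y : BS n, g = x ^ 2 * y ^ 2 := by
  open BSaux in
  have main : ∃ b : ℤ, ∃ y ∈ A n, g = tG n ^ (b + b) * y ^ 2 := by
    induction hg using Subgroup.closure_induction with
    | mem s hs =>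
      obtain ⟨x, rfl⟩ := hs
      obtain ⟨b, w, hw, rfl⟩ := decomp n x
      obtain ⟨y, hy, e⟩ := key n b w hw
      refine ⟨b, y, hy, ?_⟩
      rw [← e, zpow_add, sq]
      group
    | one => exact ⟨0, 1, one_mem _, by simp⟩
    | mul x y hx hy ihx ihy =>
      obtain ⟨b, y₁, hy₁, rfl⟩ := ihx
      obtain ⟨c, y₂, hy₂, rfl⟩ := ihy
      have hy₁' : (tG n ^ (c + c))⁻¹ * y₁ * tG n ^ (c + c) ∈ BSaux.A n := conjA' n _ y₁ hy₁
      refine ⟨b + c, ((tG n ^ (c + c))⁻¹ * y₁ * tG n ^ (c + c)) * y₂,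
        mul_mem hy₁' hy₂, ?_⟩
      rw [(commA n _ hy₁' y₂ hy₂).mul_pow 2]
      have : (tG n ^ (c+c))⁻¹ * y₁ * tG n ^ (c+c) ∈ Set.univ := trivial
      rw [show b + c + (b + c) = (b + b) + (c + c) by ring, zpow_add]
      rw [sq, sq, sq]
      group
    | inv x hx ihx =>
      obtain ⟨b, y, hy, rfl⟩ := ihx
      refine ⟨-b, tG n ^ (b + b) * y⁻¹ * (tG n ^ (b + b))⁻¹,
        conjA n _ y⁻¹ (inv_mem hy), ?_⟩
      rw [show (-b) + (-b) = -(b + b) by ring, zpow_neg]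
      rw [sq, sq]
      group
  obtain ⟨b, y, hy, rfl⟩ := main
  exact ⟨BSaux.tG n ^ b, y, by congr 1; rw [sq, ← zpow_add]⟩
end

section
/- Let n be an integer with |n| > 1, let α be a nonzero integer, u a natural number, and y an integer. Then the element (α n^{-u}, y) of BS(1,n) ≅ ℤ[1/n] ⋊ ℤ can be represented by a word on generators {a, t} of length less than 2|n|(1 + log_{|n|}|α|) + 2u + |y|. -/
/-- Multiplication in ℤ[1/n] ⋊ ℤ ≅ BS(1,n) (realized inside ℚ × ℤ):
`(α₁,β₁)(α₂,β₂) = (α₁ + n^{-β₁}α₂, β₁+β₂)`. -/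
def bsMul (n : ℤ) (p q : ℚ × ℤ) : ℚ × ℤ :=
  (p.1 + (n : ℚ) ^ (-p.2) * q.1, p.2 + q.2)

/-- The generators `a = (1,0)`, `t = (0,1)` of BS(1,n) and their inverses. -/
def bsLetters : Set (ℚ × ℤ) := {(1, 0), (-1, 0), (0, 1), (0, -1)}

namespace BSAux

def P (n : ℤ) (w : List (ℚ × ℤ)) : ℚ × ℤ := w.foldr (bsMul n) (0, 0)

lemma bsMul_assoc {n : ℤ} (hn : (n:ℚ) ≠ 0) (p q r : ℚ × ℤ) :
    bsMul n (bsMul n p q) r = bsMul n p (bsMul n q r) := by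
  simp only [bsMul, Prod.mk.injEq]
  refine ⟨?_, by ring⟩
  rw [neg_add, zpow_add₀ hn]
  ring

lemma P_append {n : ℤ} (hn : (n:ℚ) ≠ 0) (w₁ w₂ : List (ℚ × ℤ)) :
    P n (w₁ ++ w₂) = bsMul n (P n w₁) (P n w₂) := by
  induction w₁ with
  | nil => simp [P, bsMul]
  | cons a w ih =>
    simp only [P, List.cons_append, List.foldr_cons] at *
    rw [ih, ← bsMul_assoc hn]

def aPow (m : ℤ) : List (ℚ × ℤ) :=
  List.replicate m.natAbs ((if 0 ≤ m then 1 else -1 : ℚ), 0)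

def tPow (m : ℤ) : List (ℚ × ℤ) :=
  List.replicate m.natAbs ((0 : ℚ), if 0 ≤ m then 1 else -1)

lemma P_replicate_a (n : ℤ) (k : ℕ) (c : ℚ) :
    P n (List.replicate k (c, 0)) = ((k : ℚ) * c, 0) := by
  induction k with
  | zero => simp [P]
  | succ k ih =>
    simp only [List.replicate_succ, P, List.foldr_cons] at *
    rw [ih]
    apply Prod.ext <;> simp [bsMul] <;> push_cast <;> try ring

lemma P_replicate_t (n : ℤ) (k : ℕ) (c : ℤ) :
    P n (List.replicate k ((0 : ℚ), c)) = (0, (k : ℤ) * c) := by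
  induction k with
  | zero => simp [P]
  | succ k ih =>
    simp only [List.replicate_succ, P, List.foldr_cons] at *
    rw [ih]
    apply Prod.ext <;> simp [bsMul] <;> push_cast <;> try ring

lemma P_aPow (n : ℤ) (m : ℤ) : P n (aPow m) = ((m : ℚ), 0) := by
  unfold aPow
  by_cases h : 0 ≤ m
  · simp [h, P_replicate_a, Nat.cast_natAbs, abs_of_nonneg (by exact_mod_cast h : (0:ℚ) ≤ (m:ℚ))]
  · push_neg at h
    rw [if_neg (not_le.mpr h), P_replicate_a]
    have h1 : ((m.natAbs : ℕ) : ℚ) = -(m : ℚ) := by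
      rw [Nat.cast_natAbs, abs_of_neg h]; push_cast; ring
    rw [h1]
    apply Prod.ext <;> simp

lemma P_tPow (n : ℤ) (m : ℤ) : P n (tPow m) = (0, m) := by
  unfold tPow
  by_cases h : 0 ≤ m
  · rw [if_pos h, P_replicate_t]
    simp [Int.natAbs_of_nonneg h]
  · push_neg at h
    rw [if_neg (not_le.mpr h), P_replicate_t]
    rw [Int.ofNat_natAbs_of_nonpos h.le]
    simp

def dWord (es : List ℤ) : List (ℚ × ℤ) :=
  match es with
  | [] => []
  | e :: es => aPow e ++ [((0:ℚ), -1)] ++ dWord es ++ [((0:ℚ), 1)]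

def dVal (n : ℤ) (es : List ℤ) : ℚ := es.foldr (fun e v => (e : ℚ) + (n : ℚ) * v) 0

lemma P_dWord {n : ℤ} (hn : (n:ℚ) ≠ 0) (es : List ℤ) :
    P n (dWord es) = (dVal n es, 0) := by
  induction es with
  | nil => simp [P, dWord, dVal]
  | cons e es ih =>
    rw [dWord, P_append hn, P_append hn, P_append hn, ih, P_aPow]
    have h1 : P n [((0:ℚ), -1)] = ((0:ℚ), -1) := by simp [P, bsMul]
    have h2 : P n [((0:ℚ), 1)] = ((0:ℚ), 1) := by simp [P, bsMul]
    rw [h1, h2]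
    have step : dVal n (e :: es) = (e:ℚ) + (n:ℚ) * dVal n es := rfl
    rw [step]
    apply Prod.ext <;> simp [bsMul] <;> try ring

lemma dWord_length (es : List ℤ) :
    (dWord es).length = (es.map Int.natAbs).sum + 2 * es.length := by
  induction es with
  | nil => simp [dWord]
  | cons e es ih =>
    simp only [dWord, List.length_append, List.length_cons, ih, aPow,
      List.length_replicate, List.map_cons, List.sum_cons, List.length_cons,
      List.length_nil]
    ring

def sgnDigits (n : ℤ) (s : ℤ) : List ℕ → List ℤ
  | [] => []
  | d :: ds => s * d :: sgnDigits n (if n < 0 then -s else s) ds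

lemma dVal_sgnDigits (n : ℤ) (ds : List ℕ) :
    ∀ s : ℤ, s = 1 ∨ s = -1 →
      dVal n (sgnDigits n s ds) = (s : ℚ) * (Nat.ofDigits n.natAbs ds : ℕ) := by
  induction ds with
  | nil => intro s _; simp [dVal, sgnDigits, Nat.ofDigits]
  | cons d ds ih =>
    intro s hs
    have hs' : (if n < 0 then -s else s) = 1 ∨ (if n < 0 then -s else s) = -1 := by
      rcases hs with h | h <;> subst h <;> split <;> simp
    have step : ∀ (e : ℤ) (es : List ℤ), dVal n (e :: es) = (e:ℚ) + (n:ℚ) * dVal n es :=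
      fun _ _ => rfl
    rw [sgnDigits, step, ih _ hs', Nat.ofDigits_cons]
    have hna : ((n.natAbs : ℕ) : ℚ) = |(n : ℚ)| := by
      rw [Nat.cast_natAbs]; push_cast; rfl
    by_cases hneg : n < 0
    · rw [if_pos hneg]
      push_cast
      rw [hna, abs_of_neg (by exact_mod_cast hneg : (n:ℚ) < 0)]
      ring
    · rw [if_neg hneg]
      push_cast
      rw [hna, abs_of_nonneg (by exact_mod_cast not_lt.mp hneg : (0:ℚ) ≤ (n:ℚ))]
      ring

lemma sgnDigits_natAbs (n : ℤ) (ds : List ℕ) :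
    ∀ s : ℤ, s = 1 ∨ s = -1 →
      (sgnDigits n s ds).map Int.natAbs = ds := by
  induction ds with
  | nil => intro s _; simp [sgnDigits]
  | cons d ds ih =>
    intro s hs
    have hs' : (if n < 0 then -s else s) = 1 ∨ (if n < 0 then -s else s) = -1 := by
      rcases hs with h | h <;> subst h <;> split <;> simp
    rw [sgnDigits, List.map_cons, ih _ hs']
    rcases hs with h | h <;> subst h <;> simp [Int.natAbs_mul]

lemma sgnDigits_length (n : ℤ) (ds : List ℕ) (s : ℤ) :
    (sgnDigits n s ds).length = ds.length := by
  induction ds generalizing s with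
  | nil => simp [sgnDigits]
  | cons d ds ih => rw [sgnDigits]; simp [ih]

lemma aPow_letters (m : ℤ) : ∀ x ∈ aPow m, x ∈ bsLetters := by
  intro x hx
  simp only [aPow] at hx
  rw [List.eq_of_mem_replicate hx]
  by_cases h : 0 ≤ m <;> simp [h, bsLetters]

lemma tPow_letters (m : ℤ) : ∀ x ∈ tPow m, x ∈ bsLetters := by
  intro x hx
  simp only [tPow] at hx
  rw [List.eq_of_mem_replicate hx]
  by_cases h : 0 ≤ m <;> simp [h, bsLetters]

lemma dWord_letters (es : List ℤ) : ∀ x ∈ dWord es, x ∈ bsLetters := by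
  induction es with
  | nil => simp [dWord]
  | cons e es ih =>
    intro x hx
    simp only [dWord, List.mem_append, List.mem_singleton] at hx
    rcases hx with ((hx | hx) | hx) | hx
    · exact aPow_letters e x hx
    · subst hx; simp [bsLetters]
    · exact ih x hx
    · subst hx; simp [bsLetters]

end BSAux


/-- For `|n| > 1`, `α` a nonzero integer, `u : ℕ` and `y : ℤ`, the element
`(α n^{-u}, y)` of BS(1,n) ≅ ℤ[1/n] ⋊ ℤ can be written as a word on `{a, t}` of
length less than `2|n|(1 + log_{|n|}|α|) + 2u + |y|`. -/
theorem stmt_6 (n : ℤ) (hn : 1 < |n|) (α : ℤ) (hα : α ≠ 0) (u : ℕ) (y : ℤ) :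
    ∃ w : List (ℚ × ℤ), (∀ x ∈ w, x ∈ bsLetters) ∧
      w.foldr (bsMul n) (0, 0) = ((α : ℚ) * (n : ℚ) ^ (-(u : ℤ)), y) ∧
      (w.length : ℝ) <
        2 * (|n| : ℝ) * (1 + Real.logb (|n| : ℝ) (|α| : ℝ)) +
          2 * (u : ℝ) + (|y| : ℝ) := by
  classical
  have hn0 : n ≠ 0 := by intro h; simp [h] at hn
  have hnQ : (n : ℚ) ≠ 0 := Int.cast_ne_zero.mpr hn0
  set b := n.natAbs with hb_def
  have hb1 : 1 < b := by
    have : (1 : ℤ) < b := by rw [hb_def, ← Int.abs_eq_natAbs]; exact hn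
    exact_mod_cast this
  set m := α.natAbs with hm_def
  have hm : m ≠ 0 := Int.natAbs_ne_zero.mpr hα
  set ds := Nat.digits b m with hds
  set s : ℤ := if α < 0 then -1 else 1 with hs_def
  have hs : s = 1 ∨ s = -1 := by rw [hs_def]; split <;> simp
  set es := BSAux.sgnDigits n s ds with hes
  refine ⟨BSAux.tPow (u : ℤ) ++ BSAux.dWord es ++ BSAux.tPow (y - u), ?_, ?_, ?_⟩
  · intro x hx
    simp only [List.mem_append] at hx
    rcases hx with (hx | hx) | hx
    exacts [BSAux.tPow_letters _ x hx, BSAux.dWord_letters _ x hx,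
      BSAux.tPow_letters _ x hx]
  · have hV : BSAux.dVal n es = (α : ℚ) := by
      have hofd : (Nat.ofDigits n.natAbs ds : ℕ) = m := by
        rw [hds, hb_def]; exact Nat.ofDigits_digits _ _
      rw [hes, BSAux.dVal_sgnDigits n ds s hs, hofd, hm_def]
      rw [Nat.cast_natAbs]
      by_cases hneg : α < 0
      · rw [hs_def, if_pos hneg, abs_of_neg hneg]; push_cast; ring
      · rw [hs_def, if_neg hneg, abs_of_nonneg (not_lt.mp hneg)]; push_cast; ring
    have : List.foldr (bsMul n) (0, 0)
        (BSAux.tPow (u : ℤ) ++ BSAux.dWord es ++ BSAux.tPow (y - u)) =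
        bsMul n (bsMul n (BSAux.P n (BSAux.tPow (u : ℤ))) (BSAux.P n (BSAux.dWord es)))
          (BSAux.P n (BSAux.tPow (y - u))) := by
      rw [show List.foldr (bsMul n) ((0 : ℚ), (0 : ℤ))
          (BSAux.tPow (u : ℤ) ++ BSAux.dWord es ++ BSAux.tPow (y - u)) =
          BSAux.P n (BSAux.tPow (u : ℤ) ++ BSAux.dWord es ++ BSAux.tPow (y - u)) from rfl,
        BSAux.P_append hnQ, BSAux.P_append hnQ]
    rw [this, BSAux.P_tPow, BSAux.P_tPow, BSAux.P_dWord hnQ, hV]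
    apply Prod.ext <;> simp [bsMul] <;> try ring
  · -- length estimate
    have hmap : es.map Int.natAbs = ds := BSAux.sgnDigits_natAbs n ds s hs
    have hlen_es : es.length = ds.length := BSAux.sgnDigits_length n ds s
    have hsum_es : (es.map Int.natAbs).sum = ds.sum := by rw [hmap]
    have hlen : (BSAux.tPow (u : ℤ) ++ BSAux.dWord es ++ BSAux.tPow (y - u)).length
        = u + (ds.sum + 2 * ds.length) + (y - u).natAbs := by
      simp only [List.length_append, BSAux.dWord_length, hsum_es, hlen_es,
        BSAux.tPow, List.length_replicate]
      simp
    rw [hlen]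
    -- digit bounds
    have hdl : ds.length = Nat.log b m + 1 := Nat.digits_len b m hb1 hm
    have hsum : ds.sum ≤ (b - 1) * ds.length := by
      have := List.sum_le_card_nsmul ds (b - 1)
        (fun x hx => Nat.le_sub_one_of_lt (Nat.digits_lt_base hb1 hx))
      simpa [smul_eq_mul, mul_comm] using this
    have habs : (y - u).natAbs ≤ y.natAbs + u := by
      have := Int.natAbs_sub_le y u
      simpa using this
    -- real casts
    have hBr : (|n| : ℝ) = (b : ℝ) := by
      rw [hb_def, Nat.cast_natAbs, Int.cast_abs]
    have hAr : (|α| : ℝ) = (m : ℝ) := by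
      rw [hm_def, Nat.cast_natAbs, Int.cast_abs]
    have hYr : (|y| : ℝ) = (y.natAbs : ℝ) := by
      rw [Nat.cast_natAbs, Int.cast_abs]
    rw [hBr, hAr, hYr]
    set L : ℝ := Real.logb (b : ℝ) (m : ℝ) with hL
    have hlog : (Nat.log b m : ℝ) ≤ L := Real.natLog_le_logb m b
    have hL0 : 0 ≤ L := Real.logb_nonneg (by exact_mod_cast hb1)
      (by exact_mod_cast Nat.one_le_iff_ne_zero.mpr hm)
    have hB2 : (2 : ℝ) ≤ (b : ℝ) := by exact_mod_cast hb1
    have hdlR : (ds.length : ℝ) ≤ 1 + L := by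
      rw [hdl]; push_cast; linarith
    have hsumR : (ds.sum : ℝ) ≤ ((b : ℝ) - 1) * (ds.length : ℝ) := by
      have : ((b - 1 : ℕ) : ℝ) = (b : ℝ) - 1 := by
        have : 1 ≤ b := hb1.le
        push_cast [this]; ring
      calc (ds.sum : ℝ) ≤ ((b - 1) * ds.length : ℕ) := by exact_mod_cast hsum
        _ = ((b : ℝ) - 1) * (ds.length : ℝ) := by push_cast [Nat.one_le_iff_ne_zero.mpr (by omega : b ≠ 0)]; ring
    have habsR : (((y - u).natAbs : ℕ) : ℝ) ≤ (y.natAbs : ℝ) + (u : ℝ) := by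
      exact_mod_cast habs
    have hdl0 : (0 : ℝ) ≤ (ds.length : ℝ) := by positivity
    have key : ((b : ℝ) + 1) * (ds.length : ℝ) ≤ ((b : ℝ) + 1) * (1 + L) :=
      mul_le_mul_of_nonneg_left hdlR (by linarith)
    have key2 : (1 : ℝ) ≤ ((b : ℝ) - 1) * (1 + L) := by nlinarith
    push_cast at hsumR habsR key hdlR hdl0 ⊢
    nlinarith [key, key2, hsumR, habsR]
end

section
/- Let q₁, ..., q_k be integers and α a rational number with |α| > 1. If the equation q₁α^{x₁} + ... + q_kα^{x_k} = 0 has a solution in integers x₁,...,x_k, then it has a solution satisfying 0 ≤ x_i ≤ Σ_{j=1}^k log_{|α|}(|q_j| + 1) for all i. -/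
open Finset

lemma comb_aux {k : ℕ} (f : Fin k → ℕ) (w : Fin k → ℚ) (hw : ∀ i, 0 ≤ w i)
    (s : Finset (Fin k)) :
    (∑ j ∈ s, w j * ∏ i ∈ s.filter (fun i => f i < f j), (1 + w i))
      ≤ ∏ j ∈ s, (1 + w j) := by
  induction s using Finset.strongInduction with
  | _ s ih =>
    rcases s.eq_empty_or_nonempty with rfl | hs
    · simp
    obtain ⟨m, hm, hmax⟩ := s.exists_max_image f hs
    have herase : s.erase m ⊂ s := Finset.erase_ssubset hm
    have hstep := ih (s.erase m) herase
    have h1 : ∑ j ∈ s.erase m, w j * ∏ i ∈ s.filter (fun i => f i < f j), (1 + w i)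
        ≤ ∏ j ∈ s.erase m, (1 + w j) := by
      refine le_trans (le_of_eq (Finset.sum_congr rfl fun j hj => ?_)) hstep
      have : s.filter (fun i => f i < f j) = (s.erase m).filter (fun i => f i < f j) := by
        ext i
        simp only [mem_filter, mem_erase]
        constructor
        · rintro ⟨hi, hlt⟩
          refine ⟨⟨?_, hi⟩, hlt⟩
          rintro rfl
          exact absurd (hmax j (Finset.mem_of_mem_erase hj)) (not_le.mpr hlt)
        · rintro ⟨⟨_, hi⟩, hlt⟩; exact ⟨hi, hlt⟩
      rw [this]
    have h2 : w m * ∏ i ∈ s.filter (fun i => f i < f m), (1 + w i)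
        ≤ w m * ∏ i ∈ s.erase m, (1 + w i) := by
      refine mul_le_mul_of_nonneg_left ?_ (hw m)
      have hsub : s.filter (fun i => f i < f m) ⊆ s.erase m := by
        intro i hi
        rw [mem_filter] at hi
        refine Finset.mem_erase.mpr ⟨?_, hi.1⟩
        rintro rfl
        exact lt_irrefl _ hi.2
      rw [← Finset.prod_sdiff hsub]
      refine le_mul_of_one_le_left (Finset.prod_nonneg fun i _ => by linarith [hw i]) ?_
      calc (1:ℚ) = ∏ _i ∈ s.erase m \ s.filter (fun i => f i < f m), (1:ℚ) := by simp
        _ ≤ _ := Finset.prod_le_prod (fun i _ => zero_le_one) (fun i _ => by linarith [hw i])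
    rw [← Finset.add_sum_erase _ _ hm, ← Finset.mul_prod_erase _ _ hm]
    have : (1 + w m) * ∏ i ∈ s.erase m, (1 + w i)
        = ∏ i ∈ s.erase m, (1 + w i) + w m * ∏ i ∈ s.erase m, (1 + w i) := by ring
    linarith

lemma prod_one_add_mono {k : ℕ} (w : Fin k → ℚ) (hw : ∀ i, 0 ≤ w i)
    {s t : Finset (Fin k)} (hst : s ⊆ t) :
    ∏ i ∈ s, (1 + w i) ≤ ∏ i ∈ t, (1 + w i) := by
  rw [← Finset.prod_sdiff hst]
  refine le_mul_of_one_le_left (Finset.prod_nonneg fun i _ => by linarith [hw i]) ?_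
  calc (1:ℚ) = ∏ _i ∈ t \ s, (1:ℚ) := by simp
    _ ≤ _ := Finset.prod_le_prod (fun i _ => zero_le_one) (fun i _ => by linarith [hw i])

lemma main_lemma {k : ℕ} (hk : 0 < k) (q : Fin k → ℤ) (α : ℚ) (hα : 1 < |α|) :
    ∀ N : ℕ, ∀ y : Fin k → ℕ, (∑ i, (q i : ℚ) * α ^ (y i) = 0) → (∀ i, y i ≤ N) →
      ∃ z : Fin k → ℕ, (∑ i, (q i : ℚ) * α ^ (z i) = 0) ∧
        ∀ i, |α| ^ (z i) ≤ ∏ j, (1 + (|q j| : ℚ)) := by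
  have hα0 : α ≠ 0 := by
    intro h; rw [h] at hα; norm_num at hα
  -- basic facts about num/den
  set a := α.num with hadef
  set b := (α.den : ℤ) with hbdef
  have hb0 : (0:ℤ) < b := Int.natCast_pos.mpr α.pos
  have hbq0 : (0:ℚ) < (b:ℚ) := by exact_mod_cast hb0
  have hbne : (b:ℚ) ≠ 0 := ne_of_gt hbq0
  have hαdiv : (a:ℚ) / (b:ℚ) = α := by exact_mod_cast α.num_div_den
  have hαpow : ∀ n : ℕ, α ^ n = (a:ℚ)^n / (b:ℚ)^n := fun n => by
    rw [← hαdiv, div_pow]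
  have habsq : |α| = (|a|:ℚ) / (b:ℚ) := by
    rw [← hαdiv, abs_div, abs_of_pos hbq0]
  have habspow : ∀ n : ℕ, |α| ^ n = (|a|:ℚ)^n / (b:ℚ)^n := fun n => by
    rw [habsq, div_pow]
  have hba : b < |a| := by
    rw [habsq] at hα
    have := (one_lt_div hbq0).mp hα
    exact_mod_cast this
  have hcop : IsCoprime a b := by
    rw [Int.isCoprime_iff_gcd_eq_one]
    exact α.reduced
  intro N
  induction N using Nat.strong_induction_on with
  | _ N IH =>
    intro y hsum hle
    obtain ⟨i₀, -, hmin⟩ := Finset.exists_min_image Finset.univ y ⟨⟨0, hk⟩, Finset.mem_univ _⟩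
    set m := y i₀ with hm
    set y' : Fin k → ℕ := fun i => y i - m with hy'
    have hym : ∀ i, m ≤ y i := fun i => hmin i (Finset.mem_univ i)
    have hy'le : ∀ i, y' i ≤ N := fun i => le_trans (Nat.sub_le _ _) (hle i)
    have hy'0 : y' i₀ = 0 := Nat.sub_self _
    have hsum' : ∑ i, (q i : ℚ) * α ^ (y' i) = 0 := by
      have h1 : ∑ i, (q i : ℚ) * α ^ (y i) = (∑ i, (q i : ℚ) * α ^ (y' i)) * α ^ m := by
        rw [Finset.sum_mul]
        refine Finset.sum_congr rfl fun i _ => ?_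
        rw [mul_assoc, ← pow_add]
        congr 2
        have := hym i
        simp only [hy']
        omega
      rw [h1] at hsum
      exact (mul_eq_zero.mp hsum).resolve_right (pow_ne_zero _ hα0)
    by_cases hbad : ∃ g : ℕ, 0 < g ∧ (∃ i, g ≤ y' i) ∧
        ∑ i ∈ Finset.univ.filter (fun i => y' i < g), (q i : ℚ) * α ^ (y' i) = 0
    · -- Case A : split and shift down
      obtain ⟨g, hg0, ⟨i₁, hi₁⟩, hLzero⟩ := hbad
      have hgN : g ≤ N := le_trans hi₁ (hy'le i₁)
      set z : Fin k → ℕ := fun i => if y' i < g then y' i else y' i - 1 with hz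
      have hHsum : ∑ i ∈ Finset.univ.filter (fun i => ¬ y' i < g), (q i:ℚ) * α ^ y' i = 0 := by
        have h := Finset.sum_filter_add_sum_filter_not Finset.univ (fun i => y' i < g)
          (fun i => (q i:ℚ) * α ^ y' i)
        rw [hLzero, zero_add] at h
        rw [h]
        exact hsum'
      have hzsum : ∑ i, (q i : ℚ) * α ^ (z i) = 0 := by
        rw [← Finset.sum_filter_add_sum_filter_not Finset.univ (fun i => y' i < g)
          (fun i => (q i:ℚ) * α ^ (z i))]
        have e1 : ∑ i ∈ Finset.univ.filter (fun i => y' i < g), (q i:ℚ) * α ^ z i = 0 := by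
          rw [← hLzero]
          refine Finset.sum_congr rfl fun i hi => ?_
          rw [Finset.mem_filter] at hi
          simp only [hz, if_pos hi.2]
        have key : (∑ i ∈ Finset.univ.filter (fun i => ¬ y' i < g), (q i:ℚ) * α ^ z i) * α = 0 := by
          rw [Finset.sum_mul]
          calc ∑ i ∈ Finset.univ.filter (fun i => ¬ y' i < g), (q i:ℚ) * α ^ z i * α
              = ∑ i ∈ Finset.univ.filter (fun i => ¬ y' i < g), (q i:ℚ) * α ^ y' i := by
                refine Finset.sum_congr rfl fun i hi => ?_
                rw [Finset.mem_filter] at hi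
                have h1 : ¬ y' i < g := hi.2
                simp only [hz, if_neg h1]
                rw [mul_assoc, ← pow_succ]
                congr 2
                omega
            _ = 0 := hHsum
        have e2 : ∑ i ∈ Finset.univ.filter (fun i => ¬ y' i < g), (q i:ℚ) * α ^ z i = 0 :=
          (mul_eq_zero.mp key).resolve_right hα0
        rw [e1, e2, add_zero]
      have hzle : ∀ i, z i ≤ N - 1 := by
        intro i
        simp only [hz]
        split
        · omega
        · have := hy'le i; omega
      exact IH (N-1) (by omega) z hzsum hzle
    · -- Case B : bounded solution
      push_neg at hbad
      set Nm := Finset.univ.sup y' with hNmdef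
      have hleNm : ∀ i, y' i ≤ Nm := fun i => Finset.le_sup (Finset.mem_univ i)
      have etot : ∑ i, q i * a ^ (y' i) * b ^ (Nm - y' i) = 0 := by
        have hc : ((∑ i, q i * a ^ (y' i) * b ^ (Nm - y' i) : ℤ) : ℚ)
            = (b:ℚ)^Nm * ∑ i, (q i : ℚ) * α ^ (y' i) := by
          push_cast
          rw [Finset.mul_sum]
          refine Finset.sum_congr rfl fun i _ => ?_
          rw [hαpow]
          have hsplit : (b:ℚ)^Nm = (b:ℚ)^(y' i) * (b:ℚ)^(Nm - y' i) := by
            rw [← pow_add]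
            congr 1
            have := hleNm i; omega
          rw [hsplit]
          field_simp
        rw [hsum', mul_zero] at hc
        exact_mod_cast hc
      have C : ∀ g : ℕ, (∃ i, g ≤ y' i) →
          |α| ^ g ≤ ∏ j ∈ Finset.univ.filter (fun j => y' j < g), (1 + (|q j|:ℚ)) := by
        intro g
        induction g using Nat.strong_induction_on with
        | _ g ihg =>
          intro hex
          rcases Nat.eq_zero_or_pos g with rfl | hg0
          · simp
          obtain ⟨i₁, hi₁⟩ := hex
          set L := Finset.univ.filter (fun j => y' j < g) with hL
          set H := Finset.univ.filter (fun j => ¬ y' j < g) with hH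
          have hSL : ∑ i ∈ L, (q i:ℚ) * α ^ y' i ≠ 0 := hbad g hg0 ⟨i₁, hi₁⟩
          set v := L.sup y' with hv
          have hi₀L : i₀ ∈ L := by
            simp only [hL, Finset.mem_filter, Finset.mem_univ, true_and, hy'0]
            exact hg0
          have hvg : v < g := by
            refine Finset.sup_lt_iff (by simpa using hg0) |>.mpr ?_
            intro j hj
            exact (Finset.mem_filter.mp hj).2
          have hvle : ∀ j ∈ L, y' j ≤ v := fun j hj => Finset.le_sup hj
          set d := ∑ j ∈ L, q j * a ^ (y' j) * b ^ (v - y' j) with hd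
          have hdcast : (d:ℚ) = (b:ℚ)^v * ∑ i ∈ L, (q i:ℚ) * α ^ y' i := by
            simp only [hd]
            push_cast
            rw [Finset.mul_sum]
            refine Finset.sum_congr rfl fun j hj => ?_
            rw [hαpow]
            have hsplit : (b:ℚ)^v = (b:ℚ)^(y' j) * (b:ℚ)^(v - y' j) := by
              rw [← pow_add]
              congr 1
              have := hvle j hj; omega
            rw [hsplit]
            field_simp
          have hd0 : d ≠ 0 := by
            intro h
            rw [h] at hdcast
            exact hSL (by
              rcases mul_eq_zero.mp hdcast.symm with h' | h'
              · exact absurd h' (pow_ne_zero _ hbne)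
              · exact h')
          have hdvd : a ^ g ∣ d := by
            have hbd : b ^ (Nm - v) * d = ∑ j ∈ L, q j * a^(y' j) * b^(Nm - y' j) := by
              rw [hd, Finset.mul_sum]
              refine Finset.sum_congr rfl fun j hj => ?_
              have h2 : (Nm - v) + (v - y' j) = Nm - y' j := by
                have h3 := hvle j hj
                have h4 := hleNm j
                have h5 : v ≤ Nm := Finset.sup_mono (Finset.filter_subset _ _)
                omega
              calc b ^ (Nm - v) * (q j * a ^ y' j * b ^ (v - y' j))
                  = q j * a ^ y' j * (b ^ (Nm - v) * b ^ (v - y' j)) := by ring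
                _ = q j * a ^ y' j * b ^ (Nm - y' j) := by rw [← pow_add, h2]
            have hLH : (∑ j ∈ L, q j * a^(y' j) * b^(Nm - y' j))
                + ∑ j ∈ H, q j * a^(y' j) * b^(Nm - y' j) = 0 := by
              rw [Finset.sum_filter_add_sum_filter_not]
              exact etot
            have hkey : b ^ (Nm - v) * d = - ∑ j ∈ H, q j * a ^ (y' j) * b ^ (Nm - y' j) := by
              rw [hbd]
              exact eq_neg_of_add_eq_zero_left hLH
            have hdvdH : a ^ g ∣ ∑ j ∈ H, q j * a ^ (y' j) * b ^ (Nm - y' j) :=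
              Finset.dvd_sum fun j hj => by
                have hgy : g ≤ y' j := Nat.not_lt.mp (Finset.mem_filter.mp hj).2
                exact ((pow_dvd_pow a hgy).mul_left (q j)).mul_right _
            have hdvd2 : a ^ g ∣ b ^ (Nm - v) * d := by
              rw [hkey]
              exact hdvdH.neg_right
            exact (hcop.pow).dvd_of_dvd_mul_left hdvd2
          have h1 : |a| ^ g ≤ |d| := by
            have habsdvd : |a| ^ g ∣ |d| := by
              rw [← abs_pow]
              exact (abs_dvd _ _).mpr ((dvd_abs _ _).mpr hdvd)
            exact Int.le_of_dvd (abs_pos.mpr hd0) habsdvd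
          have h2 : |d| ≤ ∑ j ∈ L, |q j| * |a| ^ (y' j) * b ^ (v - y' j) := by
            refine (Finset.abs_sum_le_sum_abs _ _).trans
              (le_of_eq (Finset.sum_congr rfl fun j hj => ?_))
            rw [abs_mul, abs_mul, abs_pow, abs_pow, abs_of_pos hb0]
          have hq1 : (|a|:ℚ) ^ g ≤ ∑ j ∈ L, (|q j|:ℚ) * (|a|:ℚ) ^ (y' j) * (b:ℚ) ^ (v - y' j) := by
            exact_mod_cast h1.trans h2
          have hq2 : ∑ j ∈ L, (|q j|:ℚ) * (|a|:ℚ)^(y' j) * (b:ℚ)^(v - y' j)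
              = (b:ℚ)^v * ∑ j ∈ L, (|q j|:ℚ) * |α| ^ (y' j) := by
            rw [Finset.mul_sum]
            refine Finset.sum_congr rfl fun j hj => ?_
            rw [habspow]
            have hsplit : (b:ℚ)^v = (b:ℚ)^(y' j) * (b:ℚ)^(v - y' j) := by
              rw [← pow_add]
              congr 1
              have := hvle j hj; omega
            rw [hsplit]
            field_simp
          have hS0 : 0 ≤ ∑ j ∈ L, (|q j|:ℚ) * |α| ^ (y' j) :=
            Finset.sum_nonneg fun j _ => mul_nonneg
              (by exact_mod_cast abs_nonneg (q j)) (pow_nonneg (abs_nonneg α) _)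
          have hbq1 : (1:ℚ) ≤ (b:ℚ) := by exact_mod_cast hb0
          have hq3 : |α| ^ g ≤ ∑ j ∈ L, (|q j|:ℚ) * |α| ^ (y' j) := by
            have hbvg : (b:ℚ)^v ≤ (b:ℚ)^g := pow_le_pow_right₀ hbq1 (le_of_lt hvg)
            have hstep : (|a|:ℚ)^g ≤ (b:ℚ)^g * ∑ j ∈ L, (|q j|:ℚ) * |α| ^ (y' j) := by
              rw [hq2] at hq1
              exact hq1.trans (mul_le_mul_of_nonneg_right hbvg hS0)
            rw [habspow, div_le_iff₀ (pow_pos hbq0 g)]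
            linarith
          have hq5 : |α| ^ g ≤ ∑ j ∈ L, (|q j|:ℚ) * ∏ i ∈ L.filter (fun i => y' i < y' j), (1 + (|q i|:ℚ)) := by
            refine hq3.trans (Finset.sum_le_sum fun j hj => ?_)
            have hfe : Finset.univ.filter (fun i => y' i < y' j) = L.filter (fun i => y' i < y' j) := by
              ext i
              simp only [hL, Finset.mem_filter, Finset.mem_univ, true_and]
              constructor
              · intro h
                exact ⟨lt_trans h (Finset.mem_filter.mp hj).2, h⟩
              · exact fun h => h.2
            have hq4 : |α| ^ (y' j) ≤ ∏ i ∈ L.filter (fun i => y' i < y' j), (1 + (|q i|:ℚ)) := by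
              rw [← hfe]
              exact ihg (y' j) ((Finset.mem_filter.mp hj).2) ⟨j, le_refl _⟩
            exact mul_le_mul_of_nonneg_left hq4 (by exact_mod_cast abs_nonneg (q j))
          exact hq5.trans (comb_aux y' (fun i => (|q i|:ℚ))
            (fun i => abs_nonneg _) L)
      refine ⟨y', hsum', fun i => ?_⟩
      refine (C (y' i) ⟨i, le_refl _⟩).trans ?_
      exact prod_one_add_mono (fun j => (|q j|:ℚ))
        (fun j => abs_nonneg _) (Finset.filter_subset _ _)

/-- If `q₁α^{x₁} + ⋯ + q_kα^{x_k} = 0` (with integer `qᵢ`, rational `α`,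
`|α| > 1`) has an integer solution, then it has one with
`0 ≤ xᵢ ≤ Σⱼ log_{|α|}(|qⱼ| + 1)` for all `i`. -/
theorem stmt_7 (k : ℕ) (q : Fin k → ℤ) (α : ℚ) (hα : 1 < |α|)
    (hsol : ∃ x : Fin k → ℤ, ∑ i, (q i : ℚ) * α ^ (x i) = 0) :
    ∃ x : Fin k → ℤ,
      (∑ i, (q i : ℚ) * α ^ (x i) = 0) ∧
        ∀ i, 0 ≤ x i ∧
          (x i : ℝ) ≤ ∑ j, Real.logb |(α : ℝ)| (|(q j : ℝ)| + 1) := by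
  rcases Nat.eq_zero_or_pos k with rfl | hk
  · exact ⟨fun _ => 0, by simp, fun i => i.elim0⟩
  have hα0 : α ≠ 0 := fun h => by rw [h] at hα; norm_num at hα
  obtain ⟨x, hx⟩ := hsol
  obtain ⟨i₀, -, hmin⟩ := Finset.exists_min_image Finset.univ x ⟨⟨0, hk⟩, Finset.mem_univ _⟩
  set m := x i₀ with hm
  set y : Fin k → ℕ := fun i => (x i - m).toNat with hy
  have hxy : ∀ i, ((y i : ℤ)) = x i - m := fun i =>
    Int.toNat_of_nonneg (sub_nonneg.mpr (hmin i (Finset.mem_univ i)))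
  have hysum : ∑ i, (q i : ℚ) * α ^ (y i) = 0 := by
    have h1 : ∀ i, (α : ℚ) ^ (y i) = α ^ (x i) * α ^ (-m) := by
      intro i
      rw [← zpow_natCast α (y i), hxy i, sub_eq_add_neg, zpow_add₀ hα0]
    calc ∑ i, (q i:ℚ) * α ^ y i = ∑ i, (q i:ℚ) * α ^ x i * α ^ (-m) := by
          refine Finset.sum_congr rfl fun i _ => ?_
          rw [h1 i, mul_assoc]
      _ = (∑ i, (q i:ℚ) * α ^ x i) * α ^ (-m) := by rw [Finset.sum_mul]
      _ = 0 := by rw [hx, zero_mul]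
  obtain ⟨z, hzsum, hzbd⟩ := main_lemma hk q α hα (Finset.univ.sup y) y hysum
    (fun i => Finset.le_sup (Finset.mem_univ i))
  refine ⟨fun i => (z i : ℤ), ?_, fun i => ⟨Int.natCast_nonneg _, ?_⟩⟩
  · rw [← hzsum]
    exact Finset.sum_congr rfl fun i _ => by rw [zpow_natCast]
  · have hαR : (1:ℝ) < |(α:ℝ)| := by
      rw [← Rat.cast_abs]
      exact_mod_cast hα
    have hR : |(α:ℝ)| ^ (z i) ≤ ∏ j, (1 + |(q j:ℝ)|) := by
      have := hzbd i
      have h2 : ((|α| ^ (z i) : ℚ) : ℝ) ≤ ((∏ j, (1 + (|q j| : ℚ)) : ℚ) : ℝ) := by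
        exact_mod_cast this
      push_cast at h2
      convert h2 using 2
    have hprodpos : ∀ j : Fin k, (0:ℝ) < 1 + |(q j:ℝ)| := fun j => by positivity
    have hlogeq : Real.logb |(α:ℝ)| (|(α:ℝ)| ^ (z i)) = (z i : ℝ) := by
      rw [Real.logb_pow, Real.logb_self_eq_one hαR, mul_one]
    have hmono : Real.logb |(α:ℝ)| (|(α:ℝ)| ^ (z i))
        ≤ Real.logb |(α:ℝ)| (∏ j, (1 + |(q j:ℝ)|)) :=
      Real.logb_le_logb_of_le hαR (pow_pos (by linarith) _) hR
    have hsplit : Real.logb |(α:ℝ)| (∏ j, (1 + |(q j:ℝ)|))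
        = ∑ j, Real.logb |(α:ℝ)| (|(q j:ℝ)| + 1) := by
      rw [Real.logb, Real.log_prod (fun j _ => ne_of_gt (hprodpos j)), Finset.sum_div]
      refine Finset.sum_congr rfl fun j _ => ?_
      rw [Real.logb, add_comm]
    have hfin : ((z i : ℕ) : ℝ) ≤ ∑ j, Real.logb |(α:ℝ)| (|(q j:ℝ)| + 1) := by
      rw [← hlogeq, ← hsplit]
      exact hmono
    exact_mod_cast hfin
end

section
/- Let n be an integer and c₁ = (α₁, β₁), ..., c_k = (α_k, β_k) elements of BS(1,n) ≅ ℤ[1/n] ⋊ ℤ, with β = gcd(|β₁|, ..., |β_k|). The spherical equation z₁⁻¹c₁z₁ ⋯ z_k⁻¹c_kz_k = 1 has a solution in BS(1,n) if and only if (i) β₁ + ... + β_k = 0, and (ii) there exist integers x₁, ..., x_k with α₁n^{x₁} + ... + α_kn^{x_k} ≡ 0 (mod n^β − 1). -/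
/-- Inversion in ℤ[1/n] ⋊ ℤ: `(v, y)⁻¹ = (-n^y v, -y)`. -/
def bsInv (n : ℤ) (p : ℚ × ℤ) : ℚ × ℤ := (-(n : ℚ) ^ p.2 * p.1, -p.2)

/-- Membership of a rational number in the subring ℤ[1/n] of ℚ. -/
def inZinv (n : ℤ) (v : ℚ) : Prop := ∃ (m : ℤ) (e : ℕ), v * (n : ℚ) ^ e = m

lemma inZinv_zero (n : ℤ) : inZinv n 0 := ⟨0, 0, by simp⟩

lemma inZinv_intCast (n m : ℤ) : inZinv n (m : ℚ) := ⟨m, 0, by simp⟩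

lemma inZinv_one (n : ℤ) : inZinv n 1 := ⟨1, 0, by simp⟩

lemma inZinv_add {n : ℤ} {a b : ℚ} (ha : inZinv n a) (hb : inZinv n b) :
    inZinv n (a + b) := by
  obtain ⟨A, e, hA⟩ := ha
  obtain ⟨B, f, hB⟩ := hb
  refine ⟨A * n ^ f + B * n ^ e, e + f, ?_⟩
  push_cast
  rw [pow_add]
  linear_combination (n:ℚ)^f * hA + (n:ℚ)^e * hB

lemma inZinv_mul {n : ℤ} {a b : ℚ} (ha : inZinv n a) (hb : inZinv n b) :
    inZinv n (a * b) := by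
  obtain ⟨A, e, hA⟩ := ha
  obtain ⟨B, f, hB⟩ := hb
  refine ⟨A * B, e + f, ?_⟩
  push_cast
  rw [pow_add]
  linear_combination (b * (n:ℚ)^f) * hA + (A:ℚ) * hB

lemma inZinv_zpow (n : ℤ) (hn : (n:ℚ) ≠ 0) (m : ℤ) : inZinv n ((n:ℚ) ^ m) := by
  rcases m.eq_nat_or_neg with ⟨m', rfl | rfl⟩
  · exact ⟨n ^ m', 0, by push_cast; simp [zpow_natCast]⟩
  · exact ⟨1, m', by rw [← zpow_natCast (n:ℚ) m', ← zpow_add₀ hn]; simp⟩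

lemma inZinv_sum {n : ℤ} {k : ℕ} {f : Fin k → ℚ} (h : ∀ i, inZinv n (f i)) :
    inZinv n (∑ i, f i) :=
  Finset.sum_induction f (inZinv n) (fun _ _ => inZinv_add) (inZinv_zero n)
    (fun i _ => h i)

def psum {k : ℕ} (b : Fin k → ℤ) (i : Fin k) : ℤ := ((List.ofFn b).take i.val).sum

lemma psum_succ {k : ℕ} (b : Fin (k+1) → ℤ) (i : Fin k) :
    psum b i.succ = b 0 + psum (fun j => b j.succ) i := by
  simp [psum, List.ofFn_succ]

lemma foldr_eq (n : ℤ) (hn : (n:ℚ) ≠ 0) : ∀ (k : ℕ) (c : Fin k → ℚ × ℤ),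
    (List.ofFn c).foldr (bsMul n) (0, 0) =
      (∑ i, (n:ℚ) ^ (-(psum (fun j => (c j).2) i)) * (c i).1, ∑ i, (c i).2)
  | 0, c => by simp
  | (k+1), c => by
    rw [List.ofFn_succ, List.foldr_cons, foldr_eq n hn k (fun i => c i.succ)]
    show bsMul n (c 0) _ = _
    unfold bsMul
    refine Prod.ext ?_ ?_
    · show (c 0).1 + (n:ℚ)^(-(c 0).2) * (∑ i, (n:ℚ)^(-(psum (fun j => (c j.succ).2) i)) * (c i.succ).1) = _
      rw [Fin.sum_univ_succ]
      have h0 : psum (fun j => (c j).2) 0 = 0 := by simp [psum]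
      rw [h0, Finset.mul_sum]
      simp only [neg_zero, zpow_zero, one_mul]
      congr 1
      refine Finset.sum_congr rfl fun i _ => ?_
      rw [psum_succ (fun j => (c j).2) i, neg_add, zpow_add₀ hn]
      ring
    · show (c 0).2 + (∑ i : Fin k, (c i.succ).2) = ∑ i : Fin (k+1), (c i).2
      rw [Fin.sum_univ_succ]

lemma foldr_snd (n : ℤ) {k : ℕ} (c : Fin k → ℚ × ℤ) :
    ((List.ofFn c).foldr (bsMul n) (0, 0)).2 = ∑ i, (c i).2 := by
  induction k with
  | zero => simp
  | succ k ih =>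
    rw [List.ofFn_succ, List.foldr_cons, Fin.sum_univ_succ]
    show (c 0).2 + _ = _
    rw [ih (fun i => c i.succ)]

lemma foldr_fst_zero (n : ℤ) (l : List (ℚ × ℤ)) (h : ∀ p ∈ l, p.1 = 0) :
    (l.foldr (bsMul n) (0, 0)).1 = 0 := by
  induction l with
  | nil => rfl
  | cons a t ih =>
    show a.1 + (n:ℚ)^(-a.2) * (t.foldr (bsMul n) (0,0)).1 = 0
    rw [h a (List.mem_cons_self), ih (fun p hp => h p (List.mem_cons_of_mem a hp))]
    ring

lemma conj_snd (n : ℤ) (z : ℚ × ℤ) (a : ℚ) (b : ℤ) :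
    (bsMul n (bsMul n (bsInv n z) (a, b)) z).2 = b := by
  simp [bsMul, bsInv]

lemma conj_fst (n : ℤ) (hn : (n:ℚ) ≠ 0) (z : ℚ × ℤ) (a : ℚ) (b : ℤ) :
    (bsMul n (bsMul n (bsInv n z) (a, b)) z).1 =
      (n:ℚ)^z.2 * (a - z.1) + (n:ℚ)^(z.2 - b) * z.1 := by
  show -(n:ℚ)^z.2 * z.1 + (n:ℚ)^(-(-z.2)) * a + (n:ℚ)^(-(-z.2 + b)) * z.1 = _
  rw [neg_neg, show -(-z.2 + b) = z.2 - b by ring]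
  ring

lemma term_eq (n : ℤ) (hn : (n:ℚ) ≠ 0) (a : ℚ) (b P y : ℤ) (v : ℚ) :
    (n:ℚ)^(-P) * ((n:ℚ)^y * (a - v) + (n:ℚ)^(y - b) * v)
      = (n:ℚ)^(y - P) * a - ((n:ℚ)^(y - P - b) * v) * ((n:ℚ)^b - 1) := by
  rw [show y - P - b = (y - P) + (-b) by ring, show y - b = y + (-b) by ring,
    show y - P = y + (-P) by ring, zpow_add₀ hn, zpow_add₀ hn, zpow_add₀ hn,
    zpow_add₀ hn, zpow_neg (n:ℚ) b]
  field_simp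
  ring

lemma lemA (n : ℤ) (hn : (n:ℚ) ≠ 0) {g : ℕ} (b : ℤ) (hdvd : g ∣ b.natAbs) :
    ∃ u : ℚ, inZinv n u ∧ (n:ℚ)^b - 1 = u * ((n:ℚ)^g - 1) := by
  obtain ⟨t, ht⟩ := hdvd
  set a : ℕ := b.natAbs with ha
  have hZ : (∑ i ∈ Finset.range t, (n^g : ℤ)^i) * ((n:ℤ)^g - 1) = (n:ℤ)^a - 1 := by
    rw [geom_sum_mul, ← pow_mul, ← ht]
  set m : ℤ := ∑ i ∈ Finset.range t, (n^g : ℤ)^i with hm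
  have hQ : (m:ℚ) * ((n:ℚ)^g - 1) = (n:ℚ)^a - 1 := by
    exact_mod_cast congrArg (Int.cast : ℤ → ℚ) hZ
  rcases Int.natAbs_eq b with hb | hb
  · refine ⟨(m:ℚ), inZinv_intCast n m, ?_⟩
    rw [← ha] at hb
    rw [hb, zpow_natCast, ← hQ]
  · rw [← ha] at hb
    refine ⟨-(n:ℚ)^(-(a:ℤ)) * m, inZinv_mul
      (by rw [show -(n:ℚ)^(-(a:ℤ)) = (-1 : ℤ) * (n:ℚ)^(-(a:ℤ)) by push_cast; ring]
          ; exact inZinv_mul (inZinv_intCast n (-1)) (inZinv_zpow n hn _))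
      (inZinv_intCast n m), ?_⟩
    have hunit : (n:ℚ)^(-(a:ℤ)) * (n:ℚ)^(a:ℕ) = 1 := by
      rw [← zpow_natCast (n:ℚ) a, ← zpow_add₀ hn]; simp
    rw [hb]
    linear_combination (n:ℚ)^(-(a:ℤ)) * hQ + hunit

lemma lemB (n : ℤ) (hn : (n:ℚ) ≠ 0) (k : ℕ) (β : Fin k → ℤ) :
    ∃ w : Fin k → ℚ, (∀ i, inZinv n (w i)) ∧
      (n:ℚ)^(((Finset.univ.gcd fun i => (β i).natAbs) : ℕ) : ℤ) - 1
        = ∑ i, w i * ((n:ℚ)^(β i) - 1) := by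
  set Q : ℤ → Prop := fun m => ∃ w : Fin k → ℚ, (∀ i, inZinv n (w i)) ∧
    (n:ℚ)^m - 1 = ∑ i, w i * ((n:ℚ)^(β i) - 1) with hQ
  have h0 : Q 0 := ⟨0, fun _ => inZinv_zero n, by simp⟩
  have hadd : ∀ a b : ℤ, Q a → Q b → Q (a + b) := by
    rintro a b ⟨w₁, hw₁, he₁⟩ ⟨w₂, hw₂, he₂⟩
    refine ⟨fun i => w₁ i + (n:ℚ)^a * w₂ i,
      fun i => inZinv_add (hw₁ i) (inZinv_mul (inZinv_zpow n hn a) (hw₂ i)), ?_⟩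
    rw [zpow_add₀ hn]
    have : ∑ i, (w₁ i + (n:ℚ)^a * w₂ i) * ((n:ℚ)^(β i) - 1)
        = (∑ i, w₁ i * ((n:ℚ)^(β i) - 1)) + (n:ℚ)^a * ∑ i, w₂ i * ((n:ℚ)^(β i) - 1) := by
      rw [Finset.mul_sum, ← Finset.sum_add_distrib]
      exact Finset.sum_congr rfl fun i _ => by ring
    rw [this, ← he₁, ← he₂]
    ring
  have hneg : ∀ a : ℤ, Q a → Q (-a) := by
    rintro a ⟨w₁, hw₁, he₁⟩
    refine ⟨fun i => -(n:ℚ)^(-a) * w₁ i,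
      fun i => inZinv_mul (by
        rw [show -(n:ℚ)^(-a) = (-1 : ℤ) * (n:ℚ)^(-a) by push_cast; ring]
        exact inZinv_mul (inZinv_intCast n (-1)) (inZinv_zpow n hn _)) (hw₁ i), ?_⟩
    have hunit : (n:ℚ)^(-a) * (n:ℚ)^a = 1 := by rw [← zpow_add₀ hn]; simp
    have : ∑ i, (-(n:ℚ)^(-a) * w₁ i) * ((n:ℚ)^(β i) - 1)
        = -(n:ℚ)^(-a) * ∑ i, w₁ i * ((n:ℚ)^(β i) - 1) := by
      rw [Finset.mul_sum]
      exact Finset.sum_congr rfl fun i _ => by ring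
    rw [this, ← he₁]
    linear_combination hunit
  have hβi : ∀ j, Q (β j) := by
    intro j
    refine ⟨fun i => if i = j then 1 else 0, fun i => by
      by_cases h : i = j <;> simp [h, inZinv_zero, inZinv_one], ?_⟩
    have h1 : ∀ i, (if i = j then (1:ℚ) else 0) * ((n:ℚ)^(β i) - 1)
        = if i = j then ((n:ℚ)^(β i) - 1) else 0 := fun i => by split <;> ring
    rw [Finset.sum_congr rfl fun i _ => h1 i,
      Finset.sum_ite_eq' Finset.univ j (fun i => (n:ℚ)^(β i) - 1),
      if_pos (Finset.mem_univ j)]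
  let H : AddSubgroup ℤ :=
    { carrier := {m | Q m}
      zero_mem' := h0
      add_mem' := fun ha hb => hadd _ _ ha hb
      neg_mem' := fun ha => hneg _ ha }
  have key : ∀ s : Finset (Fin k), (((s.gcd fun i => (β i).natAbs) : ℕ) : ℤ) ∈ H := by
    intro s
    induction s using Finset.induction_on with
    | empty => simpa using h0
    | @insert a s ha ih =>
      rw [Finset.gcd_insert]
      have hrfl : gcd ((β a).natAbs) (s.gcd fun i => (β i).natAbs)
          = Nat.gcd ((β a).natAbs) (s.gcd fun i => (β i).natAbs) := rfl
      rw [hrfl]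
      have hg : ((Nat.gcd ((β a).natAbs) (s.gcd fun i => (β i).natAbs) : ℕ) : ℤ)
          = β a * Int.gcdA (β a) ((s.gcd fun i => (β i).natAbs : ℕ) : ℤ)
            + ((s.gcd fun i => (β i).natAbs : ℕ) : ℤ)
              * Int.gcdB (β a) ((s.gcd fun i => (β i).natAbs : ℕ) : ℤ) := by
        have := Int.gcd_eq_gcd_ab (β a) ((s.gcd fun i => (β i).natAbs : ℕ) : ℤ)
        rwa [Int.gcd, Int.natAbs_natCast] at this
      rw [hg]
      refine H.add_mem ?_ ?_
      · have h := H.zsmul_mem (hβi a)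
          (Int.gcdA (β a) ((s.gcd fun i => (β i).natAbs : ℕ) : ℤ))
        simpa [zsmul_eq_mul, mul_comm] using h
      · have h := H.zsmul_mem ih
          (Int.gcdB (β a) ((s.gcd fun i => (β i).natAbs : ℕ) : ℤ))
        simpa [zsmul_eq_mul, mul_comm] using h
  exact key Finset.univ

/-- The spherical equation `z₁⁻¹c₁z₁ ⋯ z_k⁻¹c_kz_k = 1` over
BS(1,n) ≅ ℤ[1/n] ⋊ ℤ, with `cᵢ = (αᵢ, βᵢ)` and `β = gcd(|β₁|,…,|β_k|)`,
has a solution iff `Σβᵢ = 0` and there exist integers `x₁,…,x_k` with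
`α₁n^{x₁} + ⋯ + α_kn^{x_k} ≡ 0 (mod n^β - 1)` in ℤ[1/n]. -/
theorem stmt_8 (n : ℤ) (k : ℕ) (α : Fin k → ℚ) (β : Fin k → ℤ)
    (hα : ∀ i, inZinv n (α i)) :
    (∃ z : Fin k → ℚ × ℤ, (∀ i, inZinv n (z i).1) ∧
        (List.ofFn fun i =>
            bsMul n (bsMul n (bsInv n (z i)) (α i, β i)) (z i)).foldr
          (bsMul n) (0, 0) = (0, 0)) ↔
      (∑ i, β i = 0) ∧
        ∃ x : Fin k → ℤ, ∃ γ : ℚ, inZinv n γ ∧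
          ∑ i, α i * (n : ℚ) ^ (x i) =
            γ * ((n : ℚ) ^ (Finset.univ.gcd fun i => (β i).natAbs) - 1) := by
  by_cases hn : (n:ℚ) = 0
  · have hn0 : n = 0 := by exact_mod_cast hn
    subst hn0
    constructor
    · rintro ⟨z, hz, heq⟩
      have hsnd := congrArg Prod.snd heq
      rw [foldr_snd] at hsnd
      simp only [conj_snd] at hsnd
      refine ⟨hsnd, fun _ => 1, 0, inZinv_zero 0, ?_⟩
      norm_num [zero_zpow]
    · rintro ⟨hβ, -⟩
      refine ⟨fun _ => (0, 1), fun _ => inZinv_zero 0, ?_⟩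
      refine Prod.ext ?_ ?_
      · apply foldr_fst_zero
        intro p hp
        rw [List.mem_ofFn] at hp
        obtain ⟨i, rfl⟩ := hp
        show (bsMul 0 (bsMul 0 (bsInv 0 (0, 1)) (α i, β i)) (0, 1)).1 = 0
        norm_num [bsMul, bsInv, zero_zpow]
      · rw [foldr_snd]
        simpa only [conj_snd] using hβ
  · have hn' : (n:ℚ) ≠ 0 := hn
    constructor
    · rintro ⟨z, hz, heq⟩
      rw [foldr_eq n hn', Prod.mk.injEq] at heq
      obtain ⟨hfst, hsnd⟩ := heq
      simp only [conj_snd, conj_fst n hn'] at hfst hsnd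
      refine ⟨hsnd, fun i => (z i).2 - psum β i, ?_⟩
      have hkey : ∑ i, α i * (n:ℚ)^((z i).2 - psum β i)
          = ∑ i, ((n:ℚ)^((z i).2 - psum β i - β i) * (z i).1) * ((n:ℚ)^(β i) - 1) := by
        rw [← sub_eq_zero, ← Finset.sum_sub_distrib, ← hfst]
        refine (Finset.sum_congr rfl fun i _ => ?_).symm
        rw [term_eq n hn' (α i) (β i) (psum β i) ((z i).2) ((z i).1)]
        ring
      choose u hu1 hu2 using fun i => lemA n hn' (g := Finset.univ.gcd fun i => (β i).natAbs)
        (β i) (Finset.gcd_dvd (Finset.mem_univ i))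
      refine ⟨∑ i, ((n:ℚ)^((z i).2 - psum β i - β i) * (z i).1) * u i,
        inZinv_sum fun i => inZinv_mul (inZinv_mul (inZinv_zpow n hn' _) (hz i)) (hu1 i), ?_⟩
      rw [hkey, Finset.sum_congr rfl fun i _ => by rw [hu2 i]]
      rw [show (∑ i, ((n:ℚ)^((z i).2 - psum β i - β i) * (z i).1) *
            (u i * ((n:ℚ)^(Finset.univ.gcd fun i => (β i).natAbs) - 1)))
          = ∑ i, (((n:ℚ)^((z i).2 - psum β i - β i) * (z i).1) * u i) *
            ((n:ℚ)^(Finset.univ.gcd fun i => (β i).natAbs) - 1)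
          from Finset.sum_congr rfl fun i _ => by ring, ← Finset.sum_mul]
    · rintro ⟨hβ, x, γ, hγ, hx⟩
      obtain ⟨w, hw, hwe⟩ := lemB n hn' k β
      rw [zpow_natCast] at hwe
      refine ⟨fun i => ((n:ℚ)^(β i - x i) * (γ * w i), x i + psum β i),
        fun i => inZinv_mul (inZinv_zpow n hn' _) (inZinv_mul hγ (hw i)), ?_⟩
      rw [foldr_eq n hn']
      refine Prod.ext ?_ ?_
      · show (∑ i, (n:ℚ)^(-(psum (fun j =>
            (bsMul n (bsMul n (bsInv n ((n:ℚ)^(β j - x j) * (γ * w j), x j + psum β j))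
              (α j, β j)) ((n:ℚ)^(β j - x j) * (γ * w j), x j + psum β j)).2) i)) *
            (bsMul n (bsMul n (bsInv n ((n:ℚ)^(β i - x i) * (γ * w i), x i + psum β i))
              (α i, β i)) ((n:ℚ)^(β i - x i) * (γ * w i), x i + psum β i)).1) = 0
        simp only [conj_snd, conj_fst n hn']
        have hterm : ∀ i : Fin k, (n:ℚ)^(-(psum β i)) *
            ((n:ℚ)^(x i + psum β i) * (α i - (n:ℚ)^(β i - x i) * (γ * w i))
              + (n:ℚ)^(x i + psum β i - β i) * ((n:ℚ)^(β i - x i) * (γ * w i)))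
            = α i * (n:ℚ)^(x i) - (γ * w i) * ((n:ℚ)^(β i) - 1) := by
          intro i
          rw [term_eq n hn' (α i) (β i) (psum β i) (x i + psum β i) _]
          rw [show x i + psum β i - psum β i - β i = x i - β i from by ring,
            show x i + psum β i - psum β i = x i from by ring]
          have hcol : (n:ℚ)^(x i - β i) * (n:ℚ)^(β i - x i) = 1 := by
            rw [← zpow_add₀ hn', show x i - β i + (β i - x i) = 0 from by ring, zpow_zero]
          linear_combination (-((n:ℚ)^(β i) - 1) * (γ * w i)) * hcol
        rw [Finset.sum_congr rfl fun i _ => hterm i, Finset.sum_sub_distrib, hx,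
          Finset.sum_congr rfl (fun i _ => (mul_assoc γ (w i) _)), ← Finset.mul_sum, ← hwe]
        ring
      · show (∑ i, (bsMul n (bsMul n (bsInv n _) (α i, β i)) _).2) = (0 : ℚ × ℤ).2
        simp only [conj_snd]
        exact hβ
end

section
/- Let n be an integer and c₁, ..., c_k ∈ BS(1,n). The orientable equation of genus g ≥ 1, ∏_{j=1}^g [x_j, y_j] ∏_{i=1}^k z_i⁻¹ c_i z_i = 1, has a solution in BS(1,n) if and only if σ_t(c₁⋯c_k) = 0 and (n−1) divides σ_a(c₁⋯c_k). -/
/-- The `a`-exponent sum of a word on `{a, t}`. -/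
def sigmaA (w : FreeGroup Bool) : ℤ :=
  Multiplicative.toAdd
    (FreeGroup.lift (fun b => Multiplicative.ofAdd (if b then (0 : ℤ) else 1)) w)

/-- The `t`-exponent sum of a word on `{a, t}`. -/
def sigmaT (w : FreeGroup Bool) : ℤ :=
  Multiplicative.toAdd
    (FreeGroup.lift (fun b => Multiplicative.ofAdd (if b then (1 : ℤ) else 0)) w)

namespace BSproof

variable (n : ℤ)

def A : BS n := PresentedGroup.of false
def T : BS n := PresentedGroup.of true

variable {n}

lemma rel1 : (T n)⁻¹ * A n * T n = (A n) ^ n := by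
  have h : PresentedGroup.mk (BSrels n) ((FreeGroup.of true)⁻¹ * FreeGroup.of false *
      FreeGroup.of true * (FreeGroup.of false ^ n)⁻¹) = 1 := by
    apply (QuotientGroup.eq_one_iff _).mpr
    exact Subgroup.subset_normalClosure rfl
  simp only [map_mul, map_inv, map_zpow] at h
  exact mul_inv_eq_one.mp h

lemma conjA (m : ℤ) : (T n)⁻¹ * (A n) ^ m * T n = (A n) ^ (m * n) := by
  have : (T n)⁻¹ * (A n) ^ m * ((T n)⁻¹)⁻¹ = ((T n)⁻¹ * A n * ((T n)⁻¹)⁻¹) ^ m :=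
    (conj_zpow).symm
  rw [inv_inv] at this
  rw [this, rel1, ← zpow_mul, mul_comm]

lemma AT (m : ℤ) : (A n) ^ m * T n = T n * (A n) ^ (m * n) := by
  rw [← conjA]; group

lemma ATpow (k : ℕ) (m : ℤ) : (A n) ^ m * (T n) ^ k = (T n) ^ k * (A n) ^ (m * n ^ k) := by
  induction k generalizing m with
  | zero => simp
  | succ k ih =>
    rw [pow_succ, ← mul_assoc, ih, mul_assoc, AT, ← mul_assoc, ← pow_succ]
    ring_nf

lemma TinvA (k : ℕ) (m : ℤ) :
    ((T n) ^ k)⁻¹ * (A n) ^ m = (A n) ^ (m * n ^ k) * ((T n) ^ k)⁻¹ := by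
  have := congrArg (fun x : BS n => x⁻¹) (ATpow k (-m))
  simp only [mul_inv_rev, zpow_neg, inv_inv] at this
  rw [this, ← zpow_neg, neg_mul, neg_neg]

variable (n)

/-- The subgroup of elements in `t^p a^m t^{-q}` normal form (which is everything). -/
def S : Subgroup (BS n) where
  carrier := {x | ∃ (p q : ℕ) (m : ℤ), x = (T n) ^ p * (A n) ^ m * ((T n) ^ q)⁻¹}
  one_mem' := ⟨0, 0, 0, by simp⟩
  inv_mem' := by
    rintro x ⟨p, q, m, rfl⟩
    exact ⟨q, p, -m, by group⟩
  mul_mem' := by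
    rintro x y ⟨p, q, m, rfl⟩ ⟨p', q', m', rfl⟩
    rcases le_or_gt q p' with h | h
    · obtain ⟨r, rfl⟩ : ∃ r, p' = q + r := ⟨p' - q, (Nat.add_sub_cancel' h).symm⟩
      refine ⟨p + r, q', m * n ^ r + m', ?_⟩
      calc (T n) ^ p * (A n) ^ m * ((T n) ^ q)⁻¹ *
            ((T n) ^ (q + r) * (A n) ^ m' * ((T n) ^ q')⁻¹)
          = (T n) ^ p * ((A n) ^ m * (T n) ^ r) * ((A n) ^ m' * ((T n) ^ q')⁻¹) := by
            rw [pow_add]; group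
        _ = (T n) ^ p * ((T n) ^ r * (A n) ^ (m * n ^ r)) * ((A n) ^ m' * ((T n) ^ q')⁻¹) := by
            rw [ATpow]
        _ = (T n) ^ (p + r) * (A n) ^ (m * n ^ r + m') * ((T n) ^ q')⁻¹ := by
            rw [pow_add, zpow_add]; group
    · obtain ⟨r, rfl⟩ : ∃ r, q = p' + r := ⟨q - p', (Nat.add_sub_cancel' h.le).symm⟩
      refine ⟨p, r + q', m + m' * n ^ r, ?_⟩
      calc (T n) ^ p * (A n) ^ m * ((T n) ^ (p' + r))⁻¹ *
            ((T n) ^ p' * (A n) ^ m' * ((T n) ^ q')⁻¹) =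
          (T n) ^ p * (A n) ^ m * ((((T n) ^ r)⁻¹ * (A n) ^ m') * ((T n) ^ q')⁻¹) := by
            rw [pow_add]; group
        _ = (T n) ^ p * (A n) ^ m * (((A n) ^ (m' * n ^ r) * ((T n) ^ r)⁻¹) * ((T n) ^ q')⁻¹) := by
            rw [TinvA]
        _ = (T n) ^ p * (A n) ^ (m + m' * n ^ r) * ((T n) ^ (r + q'))⁻¹ := by
            rw [pow_add, zpow_add]; group

variable {n}

lemma exists_nf (x : BS n) :
    ∃ (p q : ℕ) (m : ℤ), x = (T n) ^ p * (A n) ^ m * ((T n) ^ q)⁻¹ := by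
  refine PresentedGroup.generated_by _ (S n) (fun j => ?_) x
  cases j
  · exact ⟨0, 0, 1, by simp [A]⟩
  · exact ⟨1, 0, 0, by simp [T]⟩

/-- t-exponent homomorphism. -/
def homT : BS n →* Multiplicative ℤ :=
  PresentedGroup.toGroup (f := fun b => Multiplicative.ofAdd (if b then (1 : ℤ) else 0))
    (by
      rintro r rfl
      simp only [map_mul, map_inv, map_zpow, FreeGroup.lift_apply_of]
      simp [← ofAdd_zsmul])

lemma homT_mk (v : FreeGroup Bool) :
    homT (PresentedGroup.mk (BSrels n) v) = Multiplicative.ofAdd (sigmaT v) := rfl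

lemma homT_T : homT (T n) = Multiplicative.ofAdd (1 : ℤ) := PresentedGroup.toGroup.of _
lemma homT_A : homT (A n) = 1 := PresentedGroup.toGroup.of _

end BSproof

namespace BSproof2
open BSproof

variable {n : ℤ}

/-- a-exponent mod (n-1) homomorphism. -/
def piA (n : ℤ) : ℤ →+ ℤ ⧸ AddSubgroup.zmultiples (n - 1) :=
  QuotientAddGroup.mk' (AddSubgroup.zmultiples (n - 1))

def homA : BS n →* Multiplicative (ℤ ⧸ AddSubgroup.zmultiples (n - 1)) :=
  PresentedGroup.toGroup
    (f := fun b : Bool => Multiplicative.ofAdd (if b then 0 else piA n 1))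
    (by
      rintro r rfl
      simp only [map_mul, map_inv, map_zpow, FreeGroup.lift_apply_of, if_true, if_false]
      simp only [Bool.false_eq_true, if_false, if_true, ofAdd_zero, inv_one, one_mul, mul_one]
      rw [← ofAdd_zsmul, ← ofAdd_neg, ← ofAdd_add]
      have e : piA n 1 + -(n • piA n 1) = piA n (1 - n) := by
        rw [← map_zsmul, ← map_neg, ← map_add]
        norm_num
        exact (sub_eq_add_neg _ _).symm
      rw [e]
      have h0 : piA n (1 - n) = 0 := by
        rw [piA, QuotientAddGroup.mk'_apply, QuotientAddGroup.eq_zero_iff, Int.mem_zmultiples_iff]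
        exact ⟨-1, by ring⟩
      rw [h0, ofAdd_zero])

lemma homA_mk (v : FreeGroup Bool) :
    homA (PresentedGroup.mk (BSrels n) v) = Multiplicative.ofAdd (piA n (sigmaA v)) := by
  have key : ((AddMonoidHom.toMultiplicative (piA n)).comp
      (FreeGroup.lift (fun b => Multiplicative.ofAdd (if b then (0 : ℤ) else 1)))) =
      FreeGroup.lift (fun b : Bool => Multiplicative.ofAdd (if b then 0 else piA n 1)) := by
    apply FreeGroup.ext_hom
    intro a
    cases a <;> simp [piA]
  have : homA (PresentedGroup.mk (BSrels n) v) =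
      FreeGroup.lift (fun b : Bool => Multiplicative.ofAdd (if b then 0 else piA n 1)) v := rfl
  rw [this, ← key]
  rfl

lemma homA_A : homA (A n) = Multiplicative.ofAdd (piA n 1) := PresentedGroup.toGroup.of _
lemma homA_T : homA (T n) = 1 := PresentedGroup.toGroup.of _

end BSproof2


open BSproof BSproof2 in
/-- The orientable equation of genus `g ≥ 1` with constants `c i` (given by words
`w i` on `{a,t}`), namely `∏_j [x_j,y_j] ∏_i z_i⁻¹ c_i z_i = 1` (with
`[x,y] = x⁻¹y⁻¹xy`), has a solution in BS(1,n) iff `σ_t(c₁⋯c_k) = 0` and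
`(n-1) ∣ σ_a(c₁⋯c_k)`. -/
theorem stmt_9 (n : ℤ) (g k : ℕ) (hg : 1 ≤ g) (w : Fin k → FreeGroup Bool)
    (c : Fin k → BS n) (hc : ∀ i, c i = PresentedGroup.mk (BSrels n) (w i)) :
    (∃ (x y : Fin g → BS n) (z : Fin k → BS n),
        (List.ofFn fun j => (x j)⁻¹ * (y j)⁻¹ * x j * y j).prod *
          (List.ofFn fun i => (z i)⁻¹ * c i * z i).prod = 1) ↔
      sigmaT (List.ofFn w).prod = 0 ∧ (n - 1) ∣ sigmaA (List.ofFn w).prod := by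
  classical
  have hCW : PresentedGroup.mk (BSrels n) (List.ofFn w).prod = (List.ofFn c).prod := by
    rw [map_list_prod, List.map_ofFn]
    exact congrArg List.prod (congrArg List.ofFn (funext fun i => (hc i).symm))
  constructor
  · rintro ⟨x, y, z, heq⟩
    have habs : ∀ {M : Type} [CommGroup M] (F : BS n →* M),
        F (PresentedGroup.mk (BSrels n) (List.ofFn w).prod) = 1 := by
      intro M _ F
      have h2 := congrArg F heq
      rw [map_one, map_mul, map_list_prod, map_list_prod, List.map_ofFn, List.map_ofFn] at h2
      have e1 : (F ∘ fun j => (x j)⁻¹ * (y j)⁻¹ * x j * y j) = fun _ : Fin g => (1 : M) := by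
        funext j
        simp only [Function.comp_apply, map_mul, map_inv]
        rw [mul_assoc, mul_mul_mul_comm]
        simp
      have e2 : (F ∘ fun i => (z i)⁻¹ * c i * z i) = fun i => F (c i) := by
        funext i
        simp only [Function.comp_apply, map_mul, map_inv]
        rw [mul_comm, mul_inv_cancel_left]
      rw [e1, e2] at h2
      simp only [List.ofFn_const, List.prod_replicate, one_pow, one_mul] at h2
      rw [hCW, map_list_prod, List.map_ofFn]
      exact h2
    constructor
    · have h := habs homT
      rw [homT_mk] at h
      have := congrArg Multiplicative.toAdd h
      simpa using this
    · have h := habs homA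
      rw [homA_mk] at h
      have h' : piA n (sigmaA (List.ofFn w).prod) = 0 := by
        have := congrArg Multiplicative.toAdd h
        simpa using this
      rw [piA, QuotientAddGroup.mk'_apply, QuotientAddGroup.eq_zero_iff,
        Int.mem_zmultiples_iff] at h'
      exact h'
  · rintro ⟨ht, hd⟩
    obtain ⟨p, q, m, hnf⟩ := exists_nf (PresentedGroup.mk (BSrels n) (List.ofFn w).prod)
    have hT : homT (PresentedGroup.mk (BSrels n) (List.ofFn w).prod) = 1 := by
      rw [homT_mk, ht, ofAdd_zero]
    rw [hnf] at hT
    have hpq : p = q := by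
      have := congrArg Multiplicative.toAdd hT
      simp [map_mul, map_inv, map_pow, homT_T, homT_A] at this
      omega
    subst hpq
    have hA : homA (PresentedGroup.mk (BSrels n) (List.ofFn w).prod) = 1 := by
      rw [homA_mk]
      have : piA n (sigmaA (List.ofFn w).prod) = 0 := by
        rw [piA, QuotientAddGroup.mk'_apply, QuotientAddGroup.eq_zero_iff,
          Int.mem_zmultiples_iff]
        exact hd
      rw [this, ofAdd_zero]
    rw [hnf] at hA
    have hm : (n - 1) ∣ m := by
      have h1 : homA (A n : BS n) ^ m = 1 := by
        have h := hA
        simp only [map_mul, map_inv, map_pow, map_zpow] at h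
        rw [mul_comm, inv_mul_cancel_left] at h
        exact h
      rw [homA_A, ← ofAdd_zsmul] at h1
      have h2 : piA n m = 0 := by
        have h3 := congrArg Multiplicative.toAdd h1
        simp only [toAdd_ofAdd, toAdd_one] at h3
        rw [← map_zsmul (piA n) m 1, smul_eq_mul, mul_one] at h3
        exact h3
      rw [piA, QuotientAddGroup.mk'_apply, QuotientAddGroup.eq_zero_iff,
        Int.mem_zmultiples_iff] at h2
      exact h2
    obtain ⟨u, hu⟩ := hm
    obtain ⟨g', rfl⟩ : ∃ g'', g = g'' + 1 := ⟨g - 1, (Nat.succ_pred_eq_of_pos hg).symm⟩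
    refine ⟨fun j => if j = 0 then T n else 1,
      fun j => if j = 0 then (T n) ^ p * (A n) ^ u * ((T n) ^ p)⁻¹ else 1,
      fun _ => 1, ?_⟩
    have hz : (List.ofFn fun i => (1 : BS n)⁻¹ * c i * 1).prod = (List.ofFn c).prod := by
      exact congrArg List.prod (congrArg List.ofFn (funext fun i => by simp))
    rw [hz, ← hCW, hnf, List.ofFn_succ]
    have htail : (List.ofFn fun i : Fin g' =>
        ((fun j => if j = 0 then T n else 1) i.succ)⁻¹ *
          ((fun j => if j = 0 then (T n) ^ p * (A n) ^ u * ((T n) ^ p)⁻¹ else 1) i.succ)⁻¹ *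
          (fun j => if j = 0 then T n else 1) i.succ *
          (fun j => if j = 0 then (T n) ^ p * (A n) ^ u * ((T n) ^ p)⁻¹ else 1) i.succ) =
        List.ofFn fun _ : Fin g' => (1 : BS n) := by
      exact congrArg List.ofFn (funext fun i => by simp [Fin.succ_ne_zero])
    have hfin : (T n)⁻¹ * ((T n) ^ p * (A n) ^ u * ((T n) ^ p)⁻¹)⁻¹ * T n *
        ((T n) ^ p * (A n) ^ u * ((T n) ^ p)⁻¹) * ((T n) ^ p * (A n) ^ m * ((T n) ^ p)⁻¹)
        = 1 := by
      have h1 : (A n) ^ (-u) * T n = T n * (A n) ^ (-u * n) := AT (-u)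
      calc (T n)⁻¹ * ((T n) ^ p * (A n) ^ u * ((T n) ^ p)⁻¹)⁻¹ * T n *
            ((T n) ^ p * (A n) ^ u * ((T n) ^ p)⁻¹) * ((T n) ^ p * (A n) ^ m * ((T n) ^ p)⁻¹)
          = (T n)⁻¹ * (T n) ^ p * ((A n) ^ (-u) * T n) * (A n) ^ (u + m) * ((T n) ^ p)⁻¹ := by
            rw [zpow_add]; group
        _ = (T n)⁻¹ * (T n) ^ p * (T n * (A n) ^ (-u * n)) * (A n) ^ (u + m) *
            ((T n) ^ p)⁻¹ := by rw [h1]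
        _ = (T n) ^ p * (A n) ^ (-u * n + (u + m)) * ((T n) ^ p)⁻¹ := by
            rw [zpow_add]; group
        _ = 1 := by
            have h2 : -u * n + (u + m) = 0 := by rw [hu]; ring
            rw [h2]; group
    rw [List.prod_cons, htail]
    simp only [List.ofFn_const, List.prod_replicate, one_pow, mul_one]
    simpa using hfin
end

section
/- For every integer n, an element w of BS(1,n) lies in the subgroup generated by all squares if and only if gcd(2, n−1) divides σ_a(w) and 2 divides σ_t(w). -/
@[simp] lemma sigmaA_mul (u v : FreeGroup Bool) : sigmaA (u*v) = sigmaA u + sigmaA v := by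
  simp [sigmaA]
@[simp] lemma sigmaA_inv (u : FreeGroup Bool) : sigmaA u⁻¹ = - sigmaA u := by simp [sigmaA]
@[simp] lemma sigmaA_one : sigmaA 1 = 0 := by simp [sigmaA]
@[simp] lemma sigmaA_of (b : Bool) : sigmaA (.of b) = if b then 0 else 1 := by simp [sigmaA]
@[simp] lemma sigmaT_mul (u v : FreeGroup Bool) : sigmaT (u*v) = sigmaT u + sigmaT v := by
  simp [sigmaT]
@[simp] lemma sigmaT_inv (u : FreeGroup Bool) : sigmaT u⁻¹ = - sigmaT u := by simp [sigmaT]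
@[simp] lemma sigmaT_one : sigmaT 1 = 0 := by simp [sigmaT]
@[simp] lemma sigmaT_of (b : Bool) : sigmaT (.of b) = if b then 1 else 0 := by simp [sigmaT]

lemma sq_normal {G : Type*} [Group G] :
    (Subgroup.closure {s : G | ∃ x : G, s = x ^ 2}).Normal := by
  refine ⟨fun h hh g => ?_⟩
  induction hh using Subgroup.closure_induction with
  | mem x hx =>
      obtain ⟨y, rfl⟩ := hx
      exact Subgroup.subset_closure ⟨g*y*g⁻¹, (conj_pow ..).symm⟩
  | one => simpa using one_mem _
  | mul x y _ _ hx hy => convert mul_mem hx hy using 1; group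
  | inv x _ hx => convert inv_mem hx using 1; group

@[simp] lemma pure_eq_of (b : Bool) : (pure b : FreeGroup Bool) = FreeGroup.of b := rfl

lemma hom_eq {G : Type*} [CommGroup G] (f : FreeGroup Bool →* G) (w : FreeGroup Bool) :
    f w = f (.of false) ^ sigmaA w * f (.of true) ^ sigmaT w := by
  induction w using FreeGroup.induction_on with
  | C1 => simp
  | of b => cases b <;> simp [pure_eq_of]
  | inv_of b ih => cases b <;> simp [pure_eq_of]
  | mul x y hx hy =>
      rw [map_mul, hx, hy, sigmaA_mul, sigmaT_mul, zpow_add, zpow_add,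
        mul_mul_mul_comm]

/-- An element of BS(1,n), represented by a word `w` on `{a,t}`, lies in the
subgroup generated by all squares iff `gcd(2, n-1) ∣ σ_a(w)` and `2 ∣ σ_t(w)`. -/
theorem stmt_11 (n : ℤ) (w : FreeGroup Bool) :
    PresentedGroup.mk (BSrels n) w ∈
        Subgroup.closure {s : BS n | ∃ x : BS n, s = x ^ 2} ↔
      (Int.gcd 2 (n - 1) : ℤ) ∣ sigmaA w ∧ 2 ∣ sigmaT w := by
  set d : ℕ := Int.gcd 2 (n-1) with hd
  haveI : NeZero d := ⟨fun h => by simpa using (Int.gcd_eq_zero_iff.mp h).1⟩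
  have hd2 : d ∣ 2 := Nat.gcd_dvd_left _ _
  have hdn : (d : ℤ) ∣ n - 1 := Int.gcd_dvd_right _ _
  set H := Subgroup.closure {s : BS n | ∃ x : BS n, s = x ^ 2} with hH
  haveI : H.Normal := sq_normal
  constructor
  · intro hw
    -- two homomorphisms to ZMod d and ZMod 2
    have two_zmod : ((2 : ℕ) : ZMod d) = 0 := (ZMod.natCast_eq_zero_iff 2 d).mpr hd2
    constructor
    · -- sigmaA
      have hrel : ∀ r ∈ BSrels n, FreeGroup.lift
          (fun b => Multiplicative.ofAdd (if b then (0 : ZMod d) else 1)) r = 1 := by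
        rintro r rfl
        simp only [map_mul, map_inv, map_zpow, FreeGroup.lift_apply_of, if_true, if_false]
        have h0 : ((n - 1 : ℤ) : ZMod d) = 0 := (ZMod.intCast_zmod_eq_zero_iff_dvd _ d).mpr hdn
        push_cast at h0
        have hn : ((n : ℤ) : ZMod d) = 1 := sub_eq_zero.mp h0
        apply Multiplicative.toAdd.injective
        simp [hn]
      let ψ : BS n →* Multiplicative (ZMod d) := PresentedGroup.toGroup hrel
      have hker : H ≤ ψ.ker := by
        rw [hH, Subgroup.closure_le]
        rintro s ⟨x, rfl⟩
        have two' : (2 : ZMod d) = 0 := by exact_mod_cast two_zmod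
        have : ψ x ^ 2 = 1 := by
          apply Multiplicative.toAdd.injective
          rw [toAdd_pow]
          simp [nsmul_eq_mul, two']
        simpa [MonoidHom.mem_ker] using this
      have h1 : ψ (PresentedGroup.mk (BSrels n) w) = 1 := hker hw
      have h2 : ψ (PresentedGroup.mk (BSrels n) w)
          = FreeGroup.lift (fun b => Multiplicative.ofAdd (if b then (0 : ZMod d) else 1)) w :=
        rfl
      rw [h2, hom_eq] at h1
      simp only [FreeGroup.lift_apply_of, if_true, if_false] at h1
      have : ((sigmaA w : ℤ) : ZMod d) = 0 := by
        have := congrArg Multiplicative.toAdd h1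
        simpa [toAdd_zpow, zsmul_eq_mul] using this
      exact (ZMod.intCast_zmod_eq_zero_iff_dvd _ d).mp this
    · -- sigmaT
      have hrel : ∀ r ∈ BSrels n, FreeGroup.lift
          (fun b => Multiplicative.ofAdd (if b then (1 : ZMod 2) else 0)) r = 1 := by
        rintro r rfl
        apply Multiplicative.toAdd.injective
        simp
      let ψ : BS n →* Multiplicative (ZMod 2) := PresentedGroup.toGroup hrel
      have hker : H ≤ ψ.ker := by
        rw [hH, Subgroup.closure_le]
        rintro s ⟨x, rfl⟩
        have two' : (2 : ZMod 2) = 0 := by decide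
        have : ψ x ^ 2 = 1 := by
          apply Multiplicative.toAdd.injective
          rw [toAdd_pow]
          simp [nsmul_eq_mul, two']
        simpa [MonoidHom.mem_ker] using this
      have h1 : ψ (PresentedGroup.mk (BSrels n) w) = 1 := hker hw
      have h2 : ψ (PresentedGroup.mk (BSrels n) w)
          = FreeGroup.lift (fun b => Multiplicative.ofAdd (if b then (1 : ZMod 2) else 0)) w :=
        rfl
      rw [h2, hom_eq] at h1
      simp only [FreeGroup.lift_apply_of, if_true, if_false] at h1
      have : ((sigmaT w : ℤ) : ZMod 2) = 0 := by
        have := congrArg Multiplicative.toAdd h1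
        simpa [toAdd_zpow, zsmul_eq_mul] using this
      exact_mod_cast (ZMod.intCast_zmod_eq_zero_iff_dvd _ 2).mp this
  · rintro ⟨⟨k, hk⟩, ⟨m, hm⟩⟩
    -- work in the quotient Q = BS n / H
    have hsq : ∀ q : BS n ⧸ H, q ^ 2 = 1 := by
      intro q
      induction q using QuotientGroup.induction_on with
      | _ x =>
        rw [← QuotientGroup.mk_pow, QuotientGroup.eq_one_iff]
        exact Subgroup.subset_closure ⟨x, rfl⟩
    have hinv : ∀ q : BS n ⧸ H, q⁻¹ = q := fun q => by
      rw [← mul_eq_one_iff_inv_eq, ← pow_two, hsq]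
    have hcomm : ∀ a b : BS n ⧸ H, a * b = b * a := by
      intro a b
      calc a * b = (a * b)⁻¹ := (hinv _).symm
        _ = b⁻¹ * a⁻¹ := mul_inv_rev a b
        _ = b * a := by rw [hinv, hinv]
    letI : CommGroup (BS n ⧸ H) := { (inferInstance : Group (BS n ⧸ H)) with mul_comm := hcomm }
    set F : FreeGroup Bool →* BS n ⧸ H :=
      (QuotientGroup.mk' H).comp (PresentedGroup.mk (BSrels n)) with hF
    set A : BS n ⧸ H := F (.of false) with hA
    set T : BS n ⧸ H := F (.of true) with hT
    have hA2 : A ^ 2 = 1 := hsq A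
    have hT2 : T ^ 2 = 1 := hsq T
    have hrelF : F ((FreeGroup.of true)⁻¹ * FreeGroup.of false * FreeGroup.of true *
        (FreeGroup.of false ^ n)⁻¹) = 1 := by
      rw [hF, MonoidHom.comp_apply]
      have : PresentedGroup.mk (BSrels n) ((FreeGroup.of true)⁻¹ * FreeGroup.of false *
          FreeGroup.of true * (FreeGroup.of false ^ n)⁻¹) = 1 :=
        (QuotientGroup.eq_one_iff _).mpr (Subgroup.subset_normalClosure rfl)
      rw [this, map_one]
    have h1 : A * (A ^ n)⁻¹ = 1 := by
      rw [map_mul, map_mul, map_mul, map_inv, map_inv, map_zpow, ← hA, ← hT] at hrelF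
      rw [← hrelF, mul_comm T⁻¹ A, mul_assoc A T⁻¹ T, inv_mul_cancel, mul_one]
    have hAn : A ^ n = A := (mul_inv_eq_one.mp h1).symm
    have hAn1 : A ^ (n - 1) = 1 := by
      rw [zpow_sub, hAn, zpow_one, mul_inv_cancel]
    have hA2' : A ^ (2 : ℤ) = 1 := by
      rw [show (2:ℤ) = ((2:ℕ):ℤ) from rfl, zpow_natCast, hA2]
    have hAd : A ^ (d : ℤ) = 1 := by
      rw [hd, Int.gcd_eq_gcd_ab 2 (n-1), zpow_add, zpow_mul, zpow_mul, hA2', hAn1,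
        one_zpow, one_zpow, one_mul]
    have hT2' : T ^ (2 : ℤ) = 1 := by
      rw [show (2:ℤ) = ((2:ℕ):ℤ) from rfl, zpow_natCast, hT2]
    have hFw : F w = 1 := by
      rw [hom_eq, ← hA, ← hT, hk, hm, zpow_mul, zpow_mul, hAd, hT2']
      simp
    have : QuotientGroup.mk' H (PresentedGroup.mk (BSrels n) w) = 1 := hFw
    rwa [QuotientGroup.mk'_apply, QuotientGroup.eq_one_iff] at this
end

section
/- Let S = {s₁, ..., s_k} be a multiset of positive integers. Then S can be partitioned into two submultisets with equal sums if and only if the equation z₁⁻¹ a^{s₁} z₁ ⋯ z_k⁻¹ a^{s_k} z_k = 1 has a solution in BS(1,−1) = ⟨a, t | t⁻¹ a t = a⁻¹⟩. -/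
/-- The generator `a` of BS(1,n). -/
def bsA (n : ℤ) : BS n := PresentedGroup.of false

/-- products of powers of a fixed element -/
lemma prod_ofFn_zpow {G : Type*} [Group G] (g : G) :
    ∀ (k : ℕ) (e : Fin k → ℤ), (List.ofFn fun i => g ^ e i).prod = g ^ (∑ i, e i)
  | 0, e => by simp
  | (k+1), e => by
    rw [List.ofFn_succ, List.prod_cons, prod_ofFn_zpow g k (fun i => e i.succ),
      Fin.sum_univ_succ, zpow_add]

/-- the map Bool → Perm ℤ realizing BS(1,-1) as a group of affine maps -/
def bsF : Bool → Equiv.Perm ℤ := fun b => if b then Equiv.neg ℤ else Equiv.addRight 1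

lemma bsF_rels : ∀ r ∈ BSrels (-1), FreeGroup.lift bsF r = 1 := by
  intro r hr
  simp only [BSrels, Set.mem_singleton_iff] at hr
  subst hr
  simp only [map_mul, map_inv, FreeGroup.lift_apply_of, map_zpow, bsF, if_true, if_false]
  ext x
  simp [Equiv.Perm.mul_apply, Equiv.Perm.inv_def, Equiv.neg_symm]

/-- the homomorphism from BS(1,-1) to Perm ℤ -/
def bsPhi : BS (-1) →* Equiv.Perm ℤ := PresentedGroup.toGroup bsF_rels

lemma bsPhi_affine (g : BS (-1)) :
    ∃ ε c : ℤ, (ε = 1 ∨ ε = -1) ∧ ∀ x, bsPhi g x = ε * x + c := by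
  have hg : g ∈ Subgroup.closure (Set.range (PresentedGroup.of : Bool → BS (-1))) := by
    rw [PresentedGroup.closure_range_of]; trivial
  induction hg using Subgroup.closure_induction with
  | mem x hx =>
    obtain ⟨b, rfl⟩ := hx
    have : bsPhi (PresentedGroup.of b) = bsF b := PresentedGroup.toGroup.of bsF_rels
    cases b
    · exact ⟨1, 1, Or.inl rfl, fun x => by simp [this, bsF]⟩
    · exact ⟨-1, 0, Or.inr rfl, fun x => by simp [this, bsF]⟩
  | one => exact ⟨1, 0, Or.inl rfl, fun x => by simp⟩
  | mul a b _ _ ha hb =>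
    obtain ⟨ε₁, c₁, hε₁, h₁⟩ := ha
    obtain ⟨ε₂, c₂, hε₂, h₂⟩ := hb
    refine ⟨ε₁ * ε₂, ε₁ * c₂ + c₁, ?_, fun x => ?_⟩
    · rcases hε₁ with rfl | rfl <;> rcases hε₂ with rfl | rfl <;> simp
    · rw [map_mul, Equiv.Perm.mul_apply, h₂, h₁]; ring
  | inv a _ ha =>
    obtain ⟨ε, c, hε, h⟩ := ha
    have hεε : ε * ε = 1 := by rcases hε with rfl | rfl <;> ring
    refine ⟨ε, -(ε * c), hε, fun x => ?_⟩
    rw [map_inv]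
    have : (bsPhi a) (ε * x + -(ε * c)) = x := by
      rw [h]; rcases hε with rfl | rfl <;> ring
    calc (bsPhi a)⁻¹ x = (bsPhi a)⁻¹ ((bsPhi a) (ε * x + -(ε * c))) := by rw [this]
      _ = ε * x + -(ε * c) := by simp

lemma addRight_zpow (n : ℤ) : (Equiv.addRight (1 : ℤ)) ^ n = Equiv.addRight n := by
  induction n using Int.induction_on with
  | zero => ext x; simp
  | succ m ih => ext x; rw [zpow_add]; simp_all [Equiv.Perm.mul_apply]; ring
  | pred m ih => ext x; rw [zpow_sub]; simp_all [Equiv.Perm.mul_apply]; ring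

/-- A multiset `{s₁,…,s_k}` of positive integers can be partitioned into two
submultisets with equal sums iff the equation `z₁⁻¹a^{s₁}z₁ ⋯ z_k⁻¹a^{s_k}z_k = 1`
has a solution in BS(1,-1). -/
theorem stmt_15 (k : ℕ) (s : Fin k → ℤ) (hs : ∀ i, 0 < s i) :
    (∃ T : Finset (Fin k), ∑ i ∈ T, s i = ∑ i ∈ Tᶜ, s i) ↔
      ∃ z : Fin k → BS (-1),
        (List.ofFn fun i => (z i)⁻¹ * bsA (-1) ^ (s i) * z i).prod = 1 := by
  set a : BS (-1) := bsA (-1) with ha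
  set t : BS (-1) := PresentedGroup.of true with ht
  have hrel : t⁻¹ * a * t * a = 1 := by
    have hmem : ((FreeGroup.of true)⁻¹ * FreeGroup.of false * FreeGroup.of true *
        (FreeGroup.of false ^ (-1 : ℤ))⁻¹) ∈ BSrels (-1) := rfl
    have h1 : PresentedGroup.mk (BSrels (-1)) ((FreeGroup.of true)⁻¹ * FreeGroup.of false *
        FreeGroup.of true * (FreeGroup.of false ^ (-1 : ℤ))⁻¹) = 1 := by
      apply (QuotientGroup.eq_one_iff _).2
      exact Subgroup.subset_normalClosure hmem
    rw [map_mul, map_mul, map_mul, map_inv, map_inv, map_zpow] at h1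
    simp only [zpow_neg_one, inv_inv] at h1
    exact h1
  have hconj : ∀ m : ℤ, t⁻¹ * a ^ m * t = a ^ (-m) := by
    intro m
    have h2 : t⁻¹ * a * t = a⁻¹ := eq_inv_of_mul_eq_one_left hrel
    calc t⁻¹ * a ^ m * t = (t⁻¹ * a * t⁻¹⁻¹) ^ m := by rw [conj_zpow]; group
      _ = (a⁻¹) ^ m := by rw [inv_inv, h2]
      _ = a ^ (-m) := by rw [inv_zpow, zpow_neg]
  constructor
  · rintro ⟨T, hT⟩
    refine ⟨fun i => if i ∈ T then 1 else t, ?_⟩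
    have heach : ∀ i : Fin k,
        (if i ∈ T then 1 else t)⁻¹ * a ^ (s i) * (if i ∈ T then 1 else t)
          = a ^ (if i ∈ T then s i else -(s i)) := by
      intro i
      by_cases h : i ∈ T <;> simp [h, hconj]
    calc (List.ofFn fun i => (if i ∈ T then 1 else t)⁻¹ * a ^ (s i) * (if i ∈ T then 1 else t)).prod
        = (List.ofFn fun i => a ^ (if i ∈ T then s i else -(s i))).prod := by
          exact congrArg List.prod (congrArg List.ofFn (funext heach))
      _ = a ^ (∑ i, if i ∈ T then s i else -(s i)) := prod_ofFn_zpow a k _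
      _ = 1 := by
          have hsplit := Finset.sum_add_sum_compl T (fun i => if i ∈ T then s i else -(s i))
          have e1 : ∑ i ∈ T, (if i ∈ T then s i else -(s i)) = ∑ i ∈ T, s i :=
            Finset.sum_congr rfl (fun i hi => if_pos hi)
          have e2 : ∑ i ∈ Tᶜ, (if i ∈ T then s i else -(s i)) = -∑ i ∈ Tᶜ, s i := by
            rw [Finset.sum_congr rfl (fun i hi => if_neg (Finset.mem_compl.1 hi)),
              Finset.sum_neg_distrib]
          have : (∑ i, if i ∈ T then s i else -(s i)) = 0 := by
            rw [← hsplit, e1, e2, hT]; ring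
          rw [this, zpow_zero]
  · rintro ⟨z, hz⟩
    choose ε c hε hzc using fun i => bsPhi_affine (z i)
    have heach : ∀ i : Fin k, bsPhi ((z i)⁻¹ * a ^ (s i) * z i) = Equiv.addRight (ε i * s i) := by
      intro i
      have hphiA : bsPhi a = Equiv.addRight (1 : ℤ) := PresentedGroup.toGroup.of bsF_rels
      have hεε : ε i * ε i = 1 := by rcases hε i with h | h <;> rw [h] <;> ring
      ext x
      have hx1 : bsPhi (z i) (x + ε i * s i) = ε i * x + s i + c i := by
        rw [hzc]
        rcases hε i with h | h <;> rw [h] <;> ring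
      have hx2 : bsPhi (a ^ (s i)) (bsPhi (z i) x) = ε i * x + c i + s i := by
        rw [map_zpow, hphiA, addRight_zpow, hzc]; simp
      calc bsPhi ((z i)⁻¹ * a ^ (s i) * z i) x
          = (bsPhi (z i))⁻¹ (bsPhi (a ^ (s i)) (bsPhi (z i) x)) := by
            simp [map_mul, Equiv.Perm.mul_apply]
        _ = (bsPhi (z i))⁻¹ (bsPhi (z i) (x + ε i * s i)) := by
            rw [hx1, hx2]; ring_nf
        _ = x + ε i * s i := by simp
        _ = Equiv.addRight (ε i * s i) x := by simp
    have hsum : (∑ i, ε i * s i) = 0 := by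
      have h1 : bsPhi ((List.ofFn fun i => (z i)⁻¹ * a ^ (s i) * z i).prod) = 1 := by
        rw [hz, map_one]
      rw [map_list_prod] at h1
      have h2 : (List.map bsPhi (List.ofFn fun i => (z i)⁻¹ * a ^ (s i) * z i))
          = List.ofFn fun i => (Equiv.addRight (1:ℤ)) ^ (ε i * s i) := by
        rw [List.map_ofFn]
        exact congrArg List.ofFn (funext fun i => by
          rw [Function.comp_apply, heach, addRight_zpow])
      rw [h2, prod_ofFn_zpow, addRight_zpow] at h1
      have := congrArg (fun p : Equiv.Perm ℤ => p 0) h1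
      simpa using this
    refine ⟨Finset.univ.filter (fun i => ε i = 1), ?_⟩
    set S := Finset.univ.filter (fun i => ε i = 1) with hS
    have hsplit := Finset.sum_add_sum_compl S (fun i => ε i * s i)
    have e1 : ∑ i ∈ S, ε i * s i = ∑ i ∈ S, s i :=
      Finset.sum_congr rfl (fun i hi => by
        simp only [hS, Finset.mem_filter] at hi
        rw [hi.2, one_mul])
    have e2 : ∑ i ∈ Sᶜ, ε i * s i = -∑ i ∈ Sᶜ, s i := by
      rw [Finset.sum_congr rfl (fun i hi => show ε i * s i = -(s i) by
        have h2 : i ∉ S := Finset.mem_compl.1 hi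
        simp only [hS, Finset.mem_filter, Finset.mem_univ, true_and] at h2
        rcases hε i with h | h
        · exact absurd h h2
        · rw [h]; ring), Finset.sum_neg_distrib]
    rw [hsum, e1, e2] at hsplit
    linarith
end

section
/- Let n be an integer, and let c₁ = (α₁,β₁), ..., c_k = (α_k,β_k) ∈ ℤ[1/n] ⋊ ℤ ≅ BS(1,n) with Σβ_i even, and set β_x = −(1/2)Σ_{i=1}^k β_i, β = gcd(|β₁|,...,|β_k|), K = gcd(n^{|β_x|}+1, n^β−1). The equation x² ∏_{i=1}^k z_i⁻¹ c_i z_i = 1 has a solution in BS(1,n) if and only if Σβ_i ≡ 0 (mod 2) and there exist integers x₁, ..., x_k with α₁n^{x₁} + ... + α_kn^{x_k} ≡ 0 (mod K). -/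
namespace BS


lemma R_int (n m : ℤ) : inZinv n (m : ℚ) := ⟨m, 0, by simp⟩

lemma R_zero (n : ℤ) : inZinv n 0 := ⟨0, 0, by simp⟩

lemma R_add {n : ℤ} {a b : ℚ} (ha : inZinv n a) (hb : inZinv n b) : inZinv n (a + b) := by
  obtain ⟨m1, e1, h1⟩ := ha; obtain ⟨m2, e2, h2⟩ := hb
  refine ⟨m1 * n ^ e2 + m2 * n ^ e1, e1 + e2, ?_⟩
  push_cast
  rw [pow_add]
  linear_combination (n:ℚ) ^ e2 * h1 + (n:ℚ) ^ e1 * h2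

lemma R_mul {n : ℤ} {a b : ℚ} (ha : inZinv n a) (hb : inZinv n b) : inZinv n (a * b) := by
  obtain ⟨m1, e1, h1⟩ := ha; obtain ⟨m2, e2, h2⟩ := hb
  refine ⟨m1 * m2, e1 + e2, ?_⟩
  push_cast
  rw [pow_add, ← h1, ← h2]; ring

lemma R_neg {n : ℤ} {a : ℚ} (ha : inZinv n a) : inZinv n (-a) := by
  obtain ⟨m, e, h⟩ := ha; exact ⟨-m, e, by push_cast [← h]; ring⟩

lemma R_zpow {n : ℤ} (hn : (n : ℚ) ≠ 0) (z : ℤ) : inZinv n ((n : ℚ) ^ z) := by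
  refine ⟨n ^ (z + z.natAbs).toNat, z.natAbs, ?_⟩
  rw [Int.cast_pow, ← zpow_natCast (n:ℚ) ((z + z.natAbs).toNat),
    Int.toNat_of_nonneg (by omega : (0:ℤ) ≤ z + z.natAbs),
    ← zpow_natCast (n:ℚ) z.natAbs, ← zpow_add₀ hn]

lemma R_sum {n : ℤ} {k : ℕ} {f : Fin k → ℚ} (h : ∀ i, inZinv n (f i)) :
    inZinv n (∑ i, f i) := by
  classical
  induction k with
  | zero => simpa using R_zero n
  | succ k ih =>
    rw [Fin.sum_univ_succ]
    exact R_add (h 0) (ih (fun i => h i.succ))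

/-- Euclid step: Bezout-type representation of `n^gcd(a,b) - 1`. -/
lemma NT1 (n : ℤ) : ∀ a b : ℕ, ∃ u v : ℤ,
    n ^ (Nat.gcd a b) - 1 = u * (n ^ a - 1) + v * (n ^ b - 1) := by
  intro a b
  induction a, b using Nat.gcd.induction with
  | H0 b => exact ⟨0, 1, by simp⟩
  | H1 a b ha ih =>
    obtain ⟨u, v, huv⟩ := ih
    rw [Nat.gcd_rec]
    obtain ⟨c, hc⟩ : n ^ a - 1 ∣ n ^ (a * (b / a)) - 1 := by
      rw [pow_mul]; simpa using sub_dvd_pow_sub_pow (n ^ a) 1 (b / a)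
    have hb : n ^ b = n ^ (b % a) * n ^ (a * (b / a)) := by
      rw [← pow_add, Nat.mod_add_div]
    refine ⟨v - u * n ^ (b % a) * c, u, ?_⟩
    rw [huv, hb]
    linear_combination (-(u * n ^ (b % a))) * hc

lemma NT2 (n : ℤ) (k : ℕ) (f : Fin k → ℕ) :
    ∃ w : Fin k → ℤ, n ^ (Finset.univ.gcd f) - 1 = ∑ i, w i * (n ^ (f i) - 1) := by
  classical
  suffices h : ∀ s : Finset (Fin k), ∃ w : Fin k → ℤ,
      n ^ (s.gcd f) - 1 = ∑ i ∈ s, w i * (n ^ (f i) - 1) from h Finset.univ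
  intro s
  induction s using Finset.induction_on with
  | empty => exact ⟨0, by simp⟩
  | @insert a s ha ih =>
    obtain ⟨w, hw⟩ := ih
    obtain ⟨u, v, huv⟩ := NT1 n (f a) (s.gcd f)
    refine ⟨fun i => if i = a then u else v * w i, ?_⟩
    rw [Finset.gcd_insert, Finset.sum_insert ha]
    simp only [if_pos rfl]
    have h2 : ∑ i ∈ s, (if i = a then u else v * w i) * (n ^ (f i) - 1)
        = v * ∑ i ∈ s, w i * (n ^ (f i) - 1) := by
      rw [Finset.mul_sum]
      refine Finset.sum_congr rfl fun i hi => ?_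
      rw [if_neg (by rintro rfl; exact ha hi)]; ring
    have h3 : gcd (f a) (s.gcd f) = Nat.gcd (f a) (s.gcd f) := rfl
    rw [h2, ← hw, h3, huv]
    simp

lemma NT3 (n : ℤ) {p q : ℕ} (h : p ∣ q) : n ^ p - 1 ∣ n ^ q - 1 := by
  obtain ⟨c, rfl⟩ := h
  rw [pow_mul]; simpa using sub_dvd_pow_sub_pow (n ^ p) 1 c



lemma conj_eq (n : ℤ) (hn : (n : ℚ) ≠ 0) (w : ℚ × ℤ) (a : ℚ) (b : ℤ) :
    bsMul n (bsMul n (bsInv n w) (a, b)) w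
      = ((n : ℚ) ^ w.2 * (a + w.1 * ((n : ℚ) ^ (-b) - 1)), b) := by
  simp only [bsMul, bsInv]
  rw [Prod.ext_iff]
  constructor
  · simp only [neg_neg, neg_add_rev, zpow_add₀ hn, zpow_neg]
    field_simp
    ring
  · simp

lemma key (n : ℤ) (hn : (n : ℚ) ≠ 0) :
    ∀ (k : ℕ) (α : Fin k → ℚ) (β : Fin k → ℤ) (q : ℚ × ℤ),
    (∃ z : Fin k → ℚ × ℤ, (∀ i, inZinv n (z i).1) ∧
      (List.ofFn fun i =>
        bsMul n (bsMul n (bsInv n (z i)) (α i, β i)) (z i)).foldr (bsMul n) (0, 0) = q)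
    ↔ (q.2 = ∑ i, β i ∧ ∃ (x : Fin k → ℤ) (v : Fin k → ℚ), (∀ i, inZinv n (v i)) ∧
        q.1 = ∑ i, (n : ℚ) ^ (x i) * (α i + v i * ((n : ℚ) ^ (-β i) - 1))) := by
  intro k
  induction k with
  | zero =>
    intro α β q
    constructor
    · rintro ⟨z, _, h⟩
      simp only [List.ofFn_zero, List.foldr_nil] at h
      subst h
      exact ⟨by simp, fun i => i.elim0, fun i => i.elim0, fun i => i.elim0, by simp⟩
    · rintro ⟨h2, x, v, hv, h1⟩
      refine ⟨fun i => i.elim0, fun i => i.elim0, ?_⟩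
      simp only [List.ofFn_zero, List.foldr_nil]
      symm
      rw [Prod.ext_iff]
      simp at h1 h2 ⊢
      exact ⟨h1, h2⟩
  | succ k ih =>
    intro α β q
    constructor
    · rintro ⟨z, hz, h⟩
      rw [List.ofFn_succ, List.foldr_cons] at h
      set T := (List.ofFn fun i : Fin k =>
        bsMul n (bsMul n (bsInv n (z i.succ)) (α i.succ, β i.succ)) (z i.succ)).foldr
          (bsMul n) (0, 0) with hT
      obtain ⟨hT2, x', v', hv', hT1⟩ :=
        (ih (fun i => α i.succ) (fun i => β i.succ) T).1
          ⟨fun i => z i.succ, fun i => hz i.succ, rfl⟩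
      rw [conj_eq n hn] at h
      subst h
      constructor
      · simp only [bsMul, Fin.sum_univ_succ]
        rw [hT2]
      · refine ⟨Fin.cons (z 0).2 (fun i => x' i - β 0),
          Fin.cons (z 0).1 v', ?_, ?_⟩
        · intro i
          refine Fin.cases ?_ ?_ i
          · simpa using hz 0
          · intro j; simpa using hv' j
        · simp only [bsMul, Fin.sum_univ_succ, Fin.cons_zero, Fin.cons_succ]
          rw [hT1, Finset.mul_sum]
          congr 1
          refine Finset.sum_congr rfl fun i _ => ?_
          rw [← mul_assoc, ← zpow_add₀ hn]
          ring_nf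
    · rintro ⟨h2, x, v, hv, h1⟩
      obtain ⟨z', hz', hfold⟩ :=
        (ih (fun i => α i.succ) (fun i => β i.succ)
          (∑ i : Fin k, (n : ℚ) ^ (x i.succ + β 0) *
              (α i.succ + v i.succ * ((n : ℚ) ^ (-β i.succ) - 1)),
            ∑ i : Fin k, β i.succ)).2
          ⟨by simp, fun i => x i.succ + β 0, fun i => v i.succ, fun i => hv i.succ, by simp⟩
      refine ⟨Fin.cons (v 0, x 0) z', ?_, ?_⟩
      · intro i
        refine Fin.cases ?_ ?_ i
        · simpa using hv 0
        · intro j; simpa using hz' j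
      · rw [List.ofFn_succ, List.foldr_cons]
        simp only [Fin.cons_succ, Fin.cons_zero]
        rw [hfold, conj_eq n hn, bsMul]
        rw [Prod.ext_iff]
        constructor
        · simp only
          rw [h1, Fin.sum_univ_succ, Finset.mul_sum]
          congr 1
          refine Finset.sum_congr rfl fun i _ => ?_
          rw [← mul_assoc, ← zpow_add₀ hn]
          ring_nf
        · simp only
          rw [h2, Fin.sum_univ_succ]



lemma bs_zero_iff {n : ℤ} (hn : (n : ℚ) ≠ 0) (p q : ℚ × ℤ) :
    bsMul n p q = (0, 0) ↔ (q.1 = -(n : ℚ) ^ p.2 * p.1 ∧ q.2 = -p.2) := by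
  have hz : (n : ℚ) ^ p.2 ≠ 0 := zpow_ne_zero _ hn
  constructor
  · intro h
    rw [Prod.ext_iff] at h
    obtain ⟨h1, h2⟩ := h
    simp only [bsMul] at h1 h2
    refine ⟨?_, by omega⟩
    rw [zpow_neg] at h1
    field_simp at h1
    linarith
  · rintro ⟨h1, h2⟩
    rw [Prod.ext_iff]
    simp only [bsMul]
    constructor
    · rw [h1, zpow_neg]
      field_simp
      ring
    · omega

lemma foldr_zero (n : ℤ) : ∀ L : List (ℚ × ℤ), (∀ p ∈ L, p.1 = 0) →
    L.foldr (bsMul n) (0, 0) = (0, (L.map Prod.snd).sum) := by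
  intro L
  induction L with
  | nil => simp
  | cons p L ih =>
    intro h
    rw [List.foldr_cons, ih (fun q hq => h q (List.mem_cons_of_mem p hq))]
    simp [bsMul, h p List.mem_cons_self]

lemma D1 {n : ℤ} (hn : (n : ℚ) ≠ 0) (m : ℤ) :
    ∃ t : ℤ, 1 + (n : ℚ) ^ (-m) = (n : ℚ) ^ t * ((n ^ m.natAbs + 1 : ℤ) : ℚ) := by
  have hone : ∀ a : ℤ, (n : ℚ) ^ (-a) * (n : ℚ) ^ a = 1 := by
    intro a
    rw [← zpow_add₀ hn, neg_add_cancel, zpow_zero]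
  rcases le_or_gt 0 m with h | h
  · refine ⟨-m, ?_⟩
    push_cast
    rw [← zpow_natCast (n:ℚ) m.natAbs, show ((m.natAbs : ℤ)) = m by omega]
    linear_combination -hone m
  · refine ⟨0, ?_⟩
    push_cast
    rw [← zpow_natCast (n:ℚ) m.natAbs, show ((m.natAbs : ℤ)) = -m by omega, zpow_zero, one_mul, add_comm]

lemma D2 {n : ℤ} (hn : (n : ℚ) ≠ 0) (m : ℤ) :
    ∃ (t : ℤ) (ε : ℚ), (ε = 1 ∨ ε = -1) ∧
      (n : ℚ) ^ (-m) - 1 = ε * (n : ℚ) ^ t * ((n ^ m.natAbs - 1 : ℤ) : ℚ) := by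
  have hone : ∀ a : ℤ, (n : ℚ) ^ (-a) * (n : ℚ) ^ a = 1 := by
    intro a
    rw [← zpow_add₀ hn, neg_add_cancel, zpow_zero]
  rcases le_or_gt 0 m with h | h
  · refine ⟨-m, -1, Or.inr rfl, ?_⟩
    push_cast
    rw [← zpow_natCast (n:ℚ) m.natAbs, show ((m.natAbs : ℤ)) = m by omega]
    linear_combination hone m
  · refine ⟨0, 1, Or.inl rfl, ?_⟩
    push_cast
    rw [← zpow_natCast (n:ℚ) m.natAbs, show ((m.natAbs : ℤ)) = -m by omega, zpow_zero]
    ring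


end BS

open BS

/-- The nonorientable genus-1 equation `x² ∏ᵢ zᵢ⁻¹cᵢzᵢ = 1` over
BS(1,n) ≅ ℤ[1/n] ⋊ ℤ, with `cᵢ = (αᵢ, βᵢ)`, `Σβᵢ` even,
`β_x = -(1/2)Σβᵢ`, `β = gcd(|β₁|,…,|β_k|)` and
`K = gcd(n^{|β_x|}+1, n^β-1)`, has a solution iff `Σβᵢ ≡ 0 (mod 2)` and
there are integers `x₁,…,x_k` with `Σ αᵢn^{xᵢ} ≡ 0 (mod K)` in ℤ[1/n]. -/
theorem stmt_18 (n : ℤ) (k : ℕ) (α : Fin k → ℚ) (β : Fin k → ℤ)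
    (hα : ∀ i, inZinv n (α i)) (hEven : Even (∑ i, β i)) :
    (∃ x : ℚ × ℤ, inZinv n x.1 ∧ ∃ z : Fin k → ℚ × ℤ,
        (∀ i, inZinv n (z i).1) ∧
        bsMul n (bsMul n x x)
            ((List.ofFn fun i =>
                bsMul n (bsMul n (bsInv n (z i)) (α i, β i)) (z i)).foldr
              (bsMul n) (0, 0)) = (0, 0)) ↔
      ((∑ i, β i) % 2 = 0) ∧
        ∃ x : Fin k → ℤ, ∃ γ : ℚ, inZinv n γ ∧
          ∑ i, α i * (n : ℚ) ^ (x i) =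
            γ * (Int.gcd (n ^ (-(∑ i, β i) / 2).natAbs + 1)
              (n ^ (Finset.univ.gcd fun i => (β i).natAbs) - 1) : ℚ) := by
  classical
  by_cases hn : (n : ℚ) = 0
  · -- degenerate case n = 0
    have hn0 : n = 0 := by exact_mod_cast hn
    subst hn0
    have hR : ∀ v : ℚ, inZinv 0 v := fun v => ⟨0, 1, by norm_num⟩
    have hKpos : ((Int.gcd ((0:ℤ) ^ (-(∑ i, β i) / 2).natAbs + 1)
        ((0:ℤ) ^ (Finset.univ.gcd fun i => (β i).natAbs) - 1) : ℤ) : ℚ) ≠ 0 := by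
      have h1 : ((0:ℤ) ^ (-(∑ i, β i) / 2).natAbs) ≥ 0 :=
        pow_nonneg (le_refl (0:ℤ)) _
      have h2 : ((0:ℤ) ^ (-(∑ i, β i) / 2).natAbs + 1) ≠ 0 := by omega
      have h3 : Int.gcd ((0:ℤ) ^ (-(∑ i, β i) / 2).natAbs + 1)
          ((0:ℤ) ^ (Finset.univ.gcd fun i => (β i).natAbs) - 1) ≠ 0 := by
        intro hc
        exact h2 (Int.gcd_eq_zero_iff.mp hc).1
      exact_mod_cast Int.natCast_ne_zero.mpr h3
    constructor
    · intro _
      refine ⟨Int.even_iff.mp hEven, fun _ => (0:ℤ),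
        (∑ i, α i * ((0:ℤ):ℚ) ^ ((0:ℤ))) /
          (Int.gcd ((0:ℤ) ^ (-(∑ i, β i) / 2).natAbs + 1)
            ((0:ℤ) ^ (Finset.univ.gcd fun i => (β i).natAbs) - 1) : ℚ), hR _, ?_⟩
      rw [div_mul_cancel₀]
      · push_cast at hKpos ⊢
        exact hKpos
    · intro _
      refine ⟨((0:ℚ), -(∑ i, β i) / 2), hR _,
        fun i => ((0:ℚ), if β i = 1 then 2 else 1), fun i => hR _, ?_⟩
      have hconj : ∀ i : Fin k,
          bsMul 0 (bsMul 0 (bsInv 0 ((0:ℚ), if β i = 1 then (2:ℤ) else 1)) (α i, β i))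
            ((0:ℚ), if β i = 1 then (2:ℤ) else 1) = ((0:ℚ), β i) := by
        intro i
        have hy : (if β i = 1 then (2:ℤ) else 1) ≠ 0 := by split_ifs <;> norm_num
        rw [Prod.ext_iff]
        constructor
        · simp only [bsMul, bsInv, Int.cast_zero, mul_zero, zero_mul, neg_zero,
            zero_add, add_zero, neg_neg]
          rw [zero_zpow _ hy, zero_mul]
        · simp only [bsMul, bsInv]
          ring
      have hlist : (List.ofFn fun i =>
          bsMul 0 (bsMul 0 (bsInv 0 (((0:ℚ), if β i = 1 then (2:ℤ) else 1))) (α i, β i))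
            ((0:ℚ), if β i = 1 then (2:ℤ) else 1))
          = List.ofFn fun i => ((0:ℚ), β i) :=
        congrArg List.ofFn (funext hconj)
      rw [hlist, foldr_zero]
      · rw [List.map_ofFn, List.sum_ofFn]
        obtain ⟨r, hr⟩ := hEven
        have hc : (∑ i, (Prod.snd ∘ fun i => ((0:ℚ), β i)) i) = ∑ i, β i := rfl
        rw [hc, hr, Prod.ext_iff]
        constructor
        · simp [bsMul]
        · simp only [bsMul]
          show (-(r + r) / 2 + -(r + r) / 2) + (r + r) = 0
          omega
      · intro p hp
        rw [List.mem_ofFn] at hp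
        obtain ⟨i, rfl⟩ := hp
        rfl
  · -- main case n ≠ 0
    have hone : ∀ a : ℤ, (n : ℚ) ^ (-a) * (n : ℚ) ^ a = 1 := by
      intro a
      rw [← zpow_add₀ hn, neg_add_cancel, zpow_zero]
    set S := ∑ i, β i with hS
    set Sx := -S / 2 with hSx
    set Bg := Finset.univ.gcd (fun i => (β i).natAbs) with hBg
    set K := Int.gcd (n ^ Sx.natAbs + 1) (n ^ Bg - 1) with hK
    clear_value K Bg Sx S
    have hmod : S % 2 = 0 := Int.even_iff.mp hEven
    have hS2 : Sx + Sx = -S := by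
      obtain ⟨r, hr⟩ := hEven
      rw [hSx]
      omega
    have hKA : (K:ℤ) ∣ n ^ Sx.natAbs + 1 := by rw [hK]; exact Int.gcd_dvd_left _ _
    have hKB : ∀ i : Fin k, (K:ℤ) ∣ n ^ (β i).natAbs - 1 := by
      intro i
      have h1 : (K:ℤ) ∣ n ^ Bg - 1 := by rw [hK]; exact Int.gcd_dvd_right _ _
      have h2 : Bg ∣ (β i).natAbs := by
        rw [hBg]; exact Finset.gcd_dvd (Finset.mem_univ i)
      exact dvd_trans h1 (NT3 n h2)
    obtain ⟨t0, hD1⟩ := D1 hn Sx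
    choose t ε hε hD2 using fun i => D2 hn (β i)
    have hεR : ∀ i, inZinv n (ε i) := by
      intro i
      rcases hε i with h | h <;> rw [h]
      · exact ⟨1, 0, by norm_num⟩
      · exact ⟨-1, 0, by push_cast; norm_num⟩
    have hεε : ∀ i, ε i * ε i = 1 := by
      intro i
      rcases hε i with h | h <;> rw [h] <;> norm_num
    constructor
    · rintro ⟨xp, hx1, z, hz, heq⟩
      obtain ⟨hq1, hq2⟩ := (bs_zero_iff hn _ _).1 heq
      obtain ⟨hP2, xx, v, hv, hP1⟩ := (key n hn k α β _).1 ⟨z, hz, rfl⟩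
      have hmf : (bsMul n xp xp).1 = xp.1 + (n:ℚ) ^ (-xp.2) * xp.1 := rfl
      have hms : (bsMul n xp xp).2 = xp.2 + xp.2 := rfl
      rw [hmf, hms] at hq1
      rw [hms, hP2, ← hS] at hq2
      have hx2 : xp.2 = Sx := by omega
      obtain ⟨dA, hdA⟩ := hKA
      choose d hd using hKB
      refine ⟨hmod, xx,
        -(n:ℚ)^(Sx + Sx + t0) * xp.1 * (dA:ℚ)
          - ∑ i, v i * ε i * (n:ℚ)^(xx i + t i) * ((d i : ℤ):ℚ), ?_, ?_⟩
      · rw [sub_eq_add_neg]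
        exact R_add (R_mul (R_mul (R_neg (R_zpow hn _)) hx1) (R_int n dA))
          (R_neg (R_sum fun i =>
            R_mul (R_mul (R_mul (hv i) (hεR i)) (R_zpow hn _)) (R_int n (d i))))
      · have hterm : ∀ i : Fin k, (n:ℚ)^(xx i) * (α i + v i * ((n:ℚ)^(-β i) - 1))
            = α i * (n:ℚ)^(xx i)
              + v i * ε i * (n:ℚ)^(xx i + t i) * ((d i : ℤ):ℚ) * (K:ℚ) := by
          intro i
          rw [hD2 i, hd i, zpow_add₀ hn]
          push_cast
          ring
        have hleft : -((n:ℚ)^(xp.2 + xp.2)) * (xp.1 + (n:ℚ)^(-xp.2) * xp.1)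
            = -(n:ℚ)^(Sx + Sx + t0) * xp.1 * (dA:ℚ) * (K:ℚ) := by
          rw [hdA] at hD1
          push_cast at hD1
          rw [hx2]
          simp only [zpow_add₀ hn]
          linear_combination (-((n:ℚ)^Sx * (n:ℚ)^Sx) * xp.1) * hD1
        have e1 : ∑ i, (n:ℚ)^(xx i) * (α i + v i * ((n:ℚ)^(-β i) - 1))
            = -(n:ℚ)^(Sx + Sx + t0) * xp.1 * (dA:ℚ) * (K:ℚ) := by
          rw [← hP1, hq1]
          exact hleft
        have e2 : ∑ i, (n:ℚ)^(xx i) * (α i + v i * ((n:ℚ)^(-β i) - 1))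
            = ∑ i, α i * (n:ℚ)^(xx i)
              + (∑ i, v i * ε i * (n:ℚ)^(xx i + t i) * ((d i : ℤ):ℚ)) * (K:ℚ) := by
          rw [Finset.sum_congr rfl fun i _ => hterm i, Finset.sum_add_distrib,
            ← Finset.sum_mul]
        linear_combination e1 - e2
    · rintro ⟨-, xx, γ, hγ, heqn⟩
      obtain ⟨uA, uB, hbez⟩ : ∃ uA uB : ℤ,
          (K:ℤ) = (n ^ Sx.natAbs + 1) * uA + (n ^ Bg - 1) * uB :=
        ⟨_, _, by rw [hK]; exact Int.gcd_eq_gcd_ab _ _⟩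
      obtain ⟨w, hw⟩ := NT2 n k (fun i => (β i).natAbs)
      rw [← hBg] at hw
      refine ⟨(-((n:ℚ)^(-(Sx + Sx)) * (γ * (uA:ℚ) * (n:ℚ)^(-t0))), Sx),
        R_neg (R_mul (R_zpow hn _) (R_mul (R_mul hγ (R_int n uA)) (R_zpow hn _))), ?_⟩
      obtain ⟨z, hz, hfold⟩ := (key n hn k α β
        (∑ i, (n:ℚ)^(xx i) * (α i
            + (-(γ * (uB:ℚ) * ((w i : ℤ):ℚ) * ε i * (n:ℚ)^(-(t i) - xx i)))
              * ((n:ℚ)^(-β i) - 1)), S)).2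
        ⟨hS, xx,
          fun i => -(γ * (uB:ℚ) * ((w i : ℤ):ℚ) * ε i * (n:ℚ)^(-(t i) - xx i)),
          fun i => R_neg (R_mul (R_mul (R_mul (R_mul hγ (R_int n uB)) (R_int n (w i)))
            (hεR i)) (R_zpow hn _)), rfl⟩
      refine ⟨z, hz, ?_⟩
      rw [hfold]
      rw [bs_zero_iff hn]
      constructor
      · -- first components
        simp only [bsMul]
        have hterm2 : ∀ i : Fin k, (n:ℚ)^(xx i) * (α i
            + (-(γ * (uB:ℚ) * ((w i : ℤ):ℚ) * ε i * (n:ℚ)^(-(t i) - xx i)))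
              * ((n:ℚ)^(-β i) - 1))
            = α i * (n:ℚ)^(xx i)
              + (-(γ * (uB:ℚ))) * (((w i : ℤ):ℚ) * ((n ^ (β i).natAbs - 1 : ℤ):ℚ)) := by
          intro i
          rw [hD2 i]
          have hzz : (n:ℚ)^(xx i) * ((n:ℚ)^(-(t i) - xx i) * (n:ℚ)^(t i)) = 1 := by
            rw [← zpow_add₀ hn, ← zpow_add₀ hn,
              show xx i + (-(t i) - xx i + t i) = 0 by ring, zpow_zero]
          linear_combination
            (-(γ * (uB:ℚ) * ((w i : ℤ):ℚ) * ((n ^ (β i).natAbs - 1 : ℤ):ℚ)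
              * ε i * ε i)) * hzz
            + (-(γ * (uB:ℚ) * ((w i : ℤ):ℚ) * ((n ^ (β i).natAbs - 1 : ℤ):ℚ))) * (hεε i)
        have e2 : ∑ i, (n:ℚ)^(xx i) * (α i
            + (-(γ * (uB:ℚ) * ((w i : ℤ):ℚ) * ε i * (n:ℚ)^(-(t i) - xx i)))
              * ((n:ℚ)^(-β i) - 1))
            = ∑ i, α i * (n:ℚ)^(xx i)
              + (-(γ * (uB:ℚ))) * ∑ i, (((w i : ℤ):ℚ) * ((n ^ (β i).natAbs - 1 : ℤ):ℚ)) := by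
          rw [Finset.sum_congr rfl fun i _ => hterm2 i, Finset.sum_add_distrib,
            ← Finset.mul_sum]
        have hwQ : ∑ i, (((w i : ℤ):ℚ) * ((n ^ (β i).natAbs - 1 : ℤ):ℚ))
            = ((n ^ Bg - 1 : ℤ):ℚ) := by
          exact_mod_cast hw.symm
        have hbezQ : (K:ℚ) = ((n ^ Sx.natAbs + 1 : ℤ):ℚ) * (uA:ℚ)
            + ((n ^ Bg - 1 : ℤ):ℚ) * (uB:ℚ) := by
          exact_mod_cast hbez
        have hval : (∑ i, (n:ℚ)^(xx i) * (α i
            + (-(γ * (uB:ℚ) * ((w i : ℤ):ℚ) * ε i * (n:ℚ)^(-(t i) - xx i)))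
              * ((n:ℚ)^(-β i) - 1)))
            = γ * (uA:ℚ) * ((n ^ Sx.natAbs + 1 : ℤ):ℚ) := by
          have heqn' : ∑ i, α i * (n:ℚ)^(xx i) = γ * (K:ℚ) := heqn
          linear_combination e2 + heqn' + (-(γ * (uB:ℚ))) * hwQ + γ * hbezQ
        rw [hval]
        linear_combination
          (-((n:ℚ)^(Sx + Sx) * (n:ℚ)^(-(Sx + Sx)) * γ * (uA:ℚ) * (n:ℚ)^(-t0))) * hD1
          + (-(γ * (uA:ℚ) * ((n ^ Sx.natAbs + 1 : ℤ):ℚ)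
              * (n:ℚ)^(Sx + Sx) * (n:ℚ)^(-(Sx + Sx)))) * hone t0
          + (-(γ * (uA:ℚ) * ((n ^ Sx.natAbs + 1 : ℤ):ℚ))) * hone (Sx + Sx)
      · -- second components
        show S = -(Sx + Sx)
        omega
end
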